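/- arXiv:2511.12781 — 3 statements merged into one kernel-verified Lean document; each statement's English description precedes it below -/
import Mathlib

section
/- For every 2-degenerate graph G on n vertices, the minimum size of a strongly separating path system of G is at most n. -/
open scoped Classical

/-- A (vertex sequence forming a) path in a graph `G`: a nonempty list of
pairwise distinct vertices in which consecutive vertices are adjacent. -/
def IsPathList {V : Type*} (G : SimpleGraph V) (l : List V) : Prop :=
  l ≠ [] ∧ l.Chain' G.Adj ∧ l.Nodup

/-- The edge `e` occurs on the path given by the list `l`. -/
def edgeMemList {V : Type*} (e : Sym2 V) (l : List V) : Prop :=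
  ∃ p ∈ l.zip l.tail, Sym2.mk p.1 p.2 = e

/-- `P` is a strongly separating path system of `G`. -/
def StronglySeparating {V : Type*} (G : SimpleGraph V) (P : Finset (List V)) : Prop :=
  (∀ l ∈ P, IsPathList G l) ∧
  ∀ e ∈ G.edgeSet, ∀ f ∈ G.edgeSet, e ≠ f →
    (∃ l ∈ P, edgeMemList e l ∧ ¬ edgeMemList f l) ∧
    (∃ l ∈ P, edgeMemList f l ∧ ¬ edgeMemList e l)

/-- The strong separation number: the minimum size of a strongly
separating path system. -/
noncomputable def ssp {V : Type*} (G : SimpleGraph V) : ℕ :=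
  sInf {k | ∃ P : Finset (List V), StronglySeparating G P ∧ P.card = k}

/-- A graph is 2-degenerate if every (induced) subgraph has a vertex of degree at most 2. -/
def TwoDegenerate {V : Type*} (G : SimpleGraph V) : Prop :=
  ∀ S : Set V, S.Nonempty → ∃ v ∈ S, {u | u ∈ S ∧ G.Adj v u}.ncard ≤ 2

/-- `v` is an endpoint of the path given by the list `l`. -/
def IsEndpointOf {V : Type*} (v : V) (l : List V) : Prop :=
  l.head? = some v ∨ l.getLast? = some v

namespace SepAux

variable {V : Type*}

/-- extend a list by `v` at the head (`s = true`) or tail (`s = false`). -/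
def pExt (v : V) (s : Bool) (l : List V) : List V := cond s (v :: l) (l ++ [v])

/-- select the head (`s = true`) or last (`s = false`) element. -/
def endSel (s : Bool) (l : List V) : Option V := cond s l.head? l.getLast?

/-- number of "path-ends" of `l` at `u`. -/
noncomputable def endCount (l : List V) (u : V) : ℕ :=
  (if l.head? = some u then 1 else 0) + (if l.getLast? = some u then 1 else 0)

@[simp] lemma pExt_true (v : V) (l : List V) : pExt v true l = v :: l := rfl
@[simp] lemma pExt_false (v : V) (l : List V) : pExt v false l = l ++ [v] := rfl
@[simp] lemma endSel_true (l : List V) : endSel true l = l.head? := rfl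
@[simp] lemma endSel_false (l : List V) : endSel false l = l.getLast? := rfl

lemma endCount_eq (l : List V) (u : V) :
    endCount l u = (if endSel true l = some u then 1 else 0)
      + (if endSel false l = some u then 1 else 0) := rfl

lemma endSel_some_ne_nil {s : Bool} {l : List V} {u : V} (h : endSel s l = some u) :
    l ≠ [] := by
  rintro rfl; cases s <;> simp at h

lemma mem_of_endSel {s : Bool} {l : List V} {u : V} (h : endSel s l = some u) : u ∈ l := by
  cases s
  · simp only [endSel_false] at h
    exact List.mem_of_mem_getLast? (by simp [h])
  · simp only [endSel_true] at h
    exact List.mem_of_mem_head? (by simp [h])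

lemma mem_pExt {x v : V} {s : Bool} {l : List V} :
    x ∈ pExt v s l ↔ x = v ∨ x ∈ l := by
  cases s <;> simp <;> tauto

lemma v_mem_pExt (v : V) (s : Bool) (l : List V) : v ∈ pExt v s l :=
  mem_pExt.2 (Or.inl rfl)

lemma pExt_ne_nil (v : V) (s : Bool) (l : List V) : pExt v s l ≠ [] := by
  cases s <;> simp

lemma getLast?_cons_ne {l : List V} (v : V) (h : l ≠ []) :
    (v :: l).getLast? = l.getLast? := by
  cases l with
  | nil => exact absurd rfl h
  | cons a t => exact List.getLast?_cons_cons

lemma head?_append_ne {l : List V} (v : V) (h : l ≠ []) :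
    (l ++ [v]).head? = l.head? := by
  cases l with
  | nil => exact absurd rfl h
  | cons a t => simp

lemma endSel_pExt_same {s : Bool} {l : List V} (v : V) :
    endSel s (pExt v s l) = some v := by
  cases s <;> simp

lemma endSel_pExt_other {s : Bool} {l : List V} (v : V) (h : l ≠ []) :
    endSel (!s) (pExt v s l) = endSel (!s) l := by
  cases s
  · simp [head?_append_ne v h]
  · simp [getLast?_cons_ne v h]

lemma isPathList_pExt {G : SimpleGraph V} {s : Bool} {l : List V} {u v : V}
    (hl : IsPathList G l) (h : endSel s l = some u) (hadj : G.Adj v u) (hv : v ∉ l) :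
    IsPathList G (pExt v s l) := by
  obtain ⟨hne, hch, hnd⟩ := hl
  cases s with
  | true =>
    simp only [endSel_true] at h
    refine ⟨by simp, ?_, ?_⟩
    · simp only [pExt_true]
      cases l with
      | nil => exact List.isChain_singleton v
      | cons a t =>
        simp only [List.head?_cons, Option.some.injEq] at h
        subst h
        exact List.isChain_cons_cons.2 ⟨hadj, hch⟩
    · simp only [pExt_true]
      exact List.nodup_cons.2 ⟨hv, hnd⟩
  | false =>
    simp only [endSel_false] at h
    refine ⟨by simp, ?_, ?_⟩
    · simp only [pExt_false]
      refine List.isChain_append.2 ⟨hch, by simp, ?_⟩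
      intro x hx y hy
      simp only [List.head?_cons, Option.mem_def, Option.some.injEq] at hy
      rw [h] at hx
      simp only [Option.mem_def, Option.some.injEq] at hx
      subst hx; subst hy
      exact hadj.symm
    · simp only [pExt_false]
      simp [List.nodup_append, hv, hnd]
      exact fun a ha h => hv (h ▸ ha)

lemma edgeMem_nil {e : Sym2 V} : ¬ edgeMemList e ([] : List V) := by
  simp [edgeMemList]

lemma edgeMem_single {e : Sym2 V} {a : V} : ¬ edgeMemList e [a] := by
  simp [edgeMemList]

lemma edgeMem_cons_cons {e : Sym2 V} {a b : V} {t : List V} :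
    edgeMemList e (a :: b :: t) ↔ e = s(a, b) ∨ edgeMemList e (b :: t) := by
  simp only [edgeMemList, List.tail_cons, List.zip_cons_cons, List.mem_cons]
  constructor
  · rintro ⟨p, hp | hp, rfl⟩
    · subst hp; exact Or.inl rfl
    · exact Or.inr ⟨p, hp, rfl⟩
  · rintro (rfl | ⟨p, hp, rfl⟩)
    · exact ⟨(a, b), Or.inl rfl, rfl⟩
    · exact ⟨p, Or.inr hp, rfl⟩

lemma edgeMem_pair {e : Sym2 V} {a b : V} :
    edgeMemList e [a, b] ↔ e = s(a, b) := by
  rw [edgeMem_cons_cons]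
  simp [edgeMem_single]

lemma edgeMem_triple {e : Sym2 V} {a b c : V} :
    edgeMemList e [a, b, c] ↔ e = s(a, b) ∨ e = s(b, c) := by
  rw [edgeMem_cons_cons, edgeMem_pair]

lemma mem_of_edgeMem {e : Sym2 V} {l : List V} {x : V}
    (h : edgeMemList e l) (hx : x ∈ e) : x ∈ l := by
  obtain ⟨⟨a, b⟩, hp, rfl⟩ := h
  obtain ⟨ha, hb⟩ := List.of_mem_zip hp
  rcases Sym2.mem_iff.1 hx with rfl | rfl
  · exact ha
  · exact List.mem_of_mem_tail hb

lemma not_edgeMem_of_not_mem {e : Sym2 V} {l : List V} {x : V}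
    (hx : x ∈ e) (hl : x ∉ l) : ¬ edgeMemList e l :=
  fun h => hl (mem_of_edgeMem h hx)

lemma edgeMem_append {e : Sym2 V} {v : V} :
    ∀ {l : List V} {u : V}, l.getLast? = some u →
      (edgeMemList e (l ++ [v]) ↔ edgeMemList e l ∨ e = s(u, v))
  | [], u => by simp
  | [a], u => by
    intro h
    simp only [List.getLast?_singleton, Option.some.injEq] at h
    subst h
    simp [edgeMem_pair, edgeMem_single]
  | a :: b :: t, u => by
    intro h
    rw [List.getLast?_cons_cons] at h
    have IH := edgeMem_append (l := b :: t) (v := v) (e := e) h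
    simp only [List.cons_append] at IH ⊢
    rw [edgeMem_cons_cons, IH, edgeMem_cons_cons]
    tauto

lemma edgeMem_pExt {e : Sym2 V} {s : Bool} {l : List V} {u v : V}
    (h : endSel s l = some u) :
    edgeMemList e (pExt v s l) ↔ e = s(v, u) ∨ edgeMemList e l := by
  cases s with
  | true =>
    simp only [endSel_true] at h
    cases l with
    | nil => simp at h
    | cons a t =>
      simp only [List.head?_cons, Option.some.injEq] at h
      subst h
      simp only [pExt_true]
      rw [edgeMem_cons_cons]
  | false =>
    simp only [endSel_false] at h
    simp only [pExt_false]
    rw [edgeMem_append h]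
    rw [Sym2.eq_swap (a := u)]
    tauto

lemma endCount_eq_zero {l : List V} {u : V} (hv : u ∉ l) : endCount l u = 0 := by
  unfold endCount
  rw [if_neg, if_neg]
  · intro h; exact hv (List.mem_of_mem_getLast? (by simp [h]))
  · intro h; exact hv (List.mem_of_mem_head? (by simp [h]))

lemma endCount_pExt {s : Bool} {l : List V} {u v w : V} (h : endSel s l = some u) :
    endCount (pExt v s l) w + (if u = w then 1 else 0)
      = endCount l w + (if v = w then 1 else 0) := by
  have hne := endSel_some_ne_nil h
  have h1 : endSel s (pExt v s l) = some v := endSel_pExt_same v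
  have h2 : endSel (!s) (pExt v s l) = endSel (!s) l := endSel_pExt_other v hne
  cases s with
  | true =>
    simp only [Bool.not_true] at h2
    have h' : endSel true l = some u := h
    rw [endCount_eq, endCount_eq, h1, h2, h']
    simp only [Option.some.injEq]
    split_ifs <;> omega
  | false =>
    simp only [Bool.not_false] at h2
    have h' : endSel false l = some u := h
    rw [endCount_eq, endCount_eq, h1, h2, h']
    simp only [Option.some.injEq]
    split_ifs <;> omega

end SepAux
namespace SepAux

variable {V : Type*}

/-- The inductive invariant: a system of paths inside `S` such that every
edge of `G` inside `S` lies on exactly two paths, distinct edges lie on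
distinct path-pairs, and every vertex of `S` carries exactly two path-ends. -/
def Good (G : SimpleGraph V) (S : Finset V) (P : Finset (List V)) : Prop :=
  (∀ l ∈ P, IsPathList G l) ∧
  (∀ l ∈ P, ∀ x ∈ l, x ∈ S) ∧
  (∀ e ∈ G.edgeSet, (∀ x ∈ e, x ∈ S) → (P.filter fun l => edgeMemList e l).card = 2) ∧
  (∀ e ∈ G.edgeSet, ∀ f ∈ G.edgeSet, (∀ x ∈ e, x ∈ S) → (∀ x ∈ f, x ∈ S) → e ≠ f →
    (P.filter fun l => edgeMemList e l) ≠ (P.filter fun l => edgeMemList f l)) ∧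
  (∀ u ∈ S, ∑ l ∈ P, endCount l u = 2)

lemma end_of_count {A : List V} {u : V} (h : endCount A u ≠ 0) :
    ∃ s, endSel s A = some u := by
  by_cases h1 : A.head? = some u
  · exact ⟨true, h1⟩
  by_cases h2 : A.getLast? = some u
  · exact ⟨false, h2⟩
  · exact absurd (by simp [endCount, h1, h2]) h

lemma exists_end {P : Finset (List V)} {u : V} (h : ∑ l ∈ P, endCount l u = 2) :
    ∃ A ∈ P, ∃ s, endSel s A = some u := by
  have hne : ∃ A ∈ P, endCount A u ≠ 0 := by
    by_contra hc
    push_neg at hc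
    rw [Finset.sum_eq_zero hc] at h
    omega
  obtain ⟨A, hA, hA0⟩ := hne
  obtain ⟨s, hs⟩ := end_of_count hA0
  exact ⟨A, hA, s, hs⟩

lemma exists_two_ends {P : Finset (List V)} {u1 u2 : V}
    (h1 : ∑ l ∈ P, endCount l u1 = 2) (h2 : ∑ l ∈ P, endCount l u2 = 2) (hu : u1 ≠ u2) :
    ∃ A ∈ P, ∃ B ∈ P, A ≠ B ∧
      ∃ s1 s2, endSel s1 A = some u1 ∧ endSel s2 B = some u2 := by
  obtain ⟨A, hA, s1, hs1⟩ := exists_end h1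
  obtain ⟨B, hB, s2, hs2⟩ := exists_end h2
  by_cases hAB : A = B
  · subst hAB
    have hss : s1 ≠ s2 := by
      rintro rfl
      rw [hs1] at hs2
      exact hu (Option.some_inj.1 hs2)
    have hcnt : endCount A u2 = 1 := by
      cases s1 with
      | true =>
        cases s2 with
        | true => exact absurd rfl hss
        | false =>
          rw [endCount_eq, hs2, if_pos rfl, hs1, if_neg (by simp [hu])]
      | false =>
        cases s2 with
        | true =>
          rw [endCount_eq, hs2, if_pos rfl, hs1, if_neg (by simp [hu])]
        | false => exact absurd rfl hss
    have hsum : ∑ l ∈ P.erase A, endCount l u2 = 1 := by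
      have := Finset.add_sum_erase P (fun l => endCount l u2) hA
      simp only [hcnt] at this
      omega
    have hne : ∃ B' ∈ P.erase A, endCount B' u2 ≠ 0 := by
      by_contra hc
      push_neg at hc
      rw [Finset.sum_eq_zero hc] at hsum
      omega
    obtain ⟨B', hB', hB0⟩ := hne
    obtain ⟨s2', hs2'⟩ := end_of_count hB0
    obtain ⟨hBA, hB'P⟩ := Finset.mem_erase.1 hB'
    exact ⟨A, hA, B', hB'P, Ne.symm hBA, s1, s2', hs1, hs2'⟩
  · exact ⟨A, hA, B, hB, hAB, s1, s2, hs1, hs2⟩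

lemma endSel_singleton (s : Bool) (u : V) : endSel s [u] = some u := by
  cases s <;> simp

end SepAux
namespace SepAux

variable {V : Type*}

lemma mem_insert_edge {G : SimpleGraph V} {S : Finset V} {v : V} (hv : v ∉ S)
    {e : Sym2 V} (he : e ∈ G.edgeSet) (hes : ∀ x ∈ e, x ∈ insert v S)
    (hve : v ∉ e) : ∀ x ∈ e, x ∈ S := by
  intro x hx
  rcases Finset.mem_insert.1 (hes x hx) with rfl | h
  · exact absurd hx hve
  · exact h

lemma new_edge_class {G : SimpleGraph V} {S : Finset V} {v : V} (hv : v ∉ S)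
    {e : Sym2 V} (he : e ∈ G.edgeSet) (hes : ∀ x ∈ e, x ∈ insert v S)
    (hve : v ∈ e) : ∃ x ∈ S, G.Adj v x ∧ e = s(v, x) := by
  obtain ⟨x, rfl⟩ := Sym2.mem_iff_exists.1 hve
  have hadj : G.Adj v x := (SimpleGraph.mem_edgeSet G).1 he
  refine ⟨x, ?_, hadj, rfl⟩
  rcases Finset.mem_insert.1 (hes x (Sym2.mem_mk_right v x)) with rfl | h
  · exact absurd rfl hadj.ne
  · exact h

lemma step0 {G : SimpleGraph V} {S : Finset V} {P : Finset (List V)}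
    (hG : Good G S P) {v : V} (hv : v ∉ S)
    (hnb : ∀ x ∈ S, ¬ G.Adj v x) :
    ∃ P', Good G (insert v S) P' ∧ P'.card = P.card + 1 := by
  obtain ⟨hPath, hSub, hCard2, hDist, hEnds⟩ := hG
  have hvl : ∀ l ∈ P, v ∉ l := fun l hl hvm => hv (hSub l hl v hvm)
  have hCP : ([v] : List V) ∉ P := fun h => hvl [v] h (by simp)
  refine ⟨insert [v] P, ⟨?_, ?_, ?_, ?_, ?_⟩, Finset.card_insert_of_notMem hCP⟩
  · intro l hl
    rcases Finset.mem_insert.1 hl with rfl | hl'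
    · exact ⟨by simp, List.isChain_singleton v, by simp⟩
    · exact hPath l hl'
  · intro l hl x hx
    rcases Finset.mem_insert.1 hl with rfl | hl'
    · simp only [List.mem_singleton] at hx
      exact Finset.mem_insert.2 (Or.inl hx)
    · exact Finset.mem_insert.2 (Or.inr (hSub l hl' x hx))
  · intro e he hes
    have hve : v ∉ e := by
      intro hve
      obtain ⟨x, hxS, hadj, rfl⟩ := new_edge_class hv he hes hve
      exact hnb x hxS hadj
    rw [Finset.filter_insert, if_neg edgeMem_single]
    exact hCard2 e he (mem_insert_edge hv he hes hve)
  · intro e he f hf hes hfs hef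
    have hve : v ∉ e := by
      intro hve
      obtain ⟨x, hxS, hadj, rfl⟩ := new_edge_class hv he hes hve
      exact hnb x hxS hadj
    have hvf : v ∉ f := by
      intro hvf
      obtain ⟨x, hxS, hadj, rfl⟩ := new_edge_class hv hf hfs hvf
      exact hnb x hxS hadj
    rw [Finset.filter_insert, if_neg edgeMem_single,
      Finset.filter_insert, if_neg edgeMem_single]
    exact hDist e he f hf (mem_insert_edge hv he hes hve) (mem_insert_edge hv hf hfs hvf) hef
  · intro u hu
    rw [Finset.sum_insert hCP]
    rcases Finset.mem_insert.1 hu with rfl | huS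
    · have h0 : ∑ l ∈ P, endCount l u = 0 :=
        Finset.sum_eq_zero fun l hl => endCount_eq_zero (hvl l hl)
      rw [h0]
      simp [endCount]
    · have hvu : v ≠ u := fun h => hv (h ▸ huS)
      have h1 : endCount ([v] : List V) u = 0 := by simp [endCount, hvu]
      rw [h1, hEnds u huS]

end SepAux
namespace SepAux

variable {V : Type*}

lemma img_card {P : Finset (List V)} {ρ : List V → List V}
    (hinj : ∀ l ∈ P, ∀ m ∈ P, ρ l = ρ m → l = m) {s : Finset (List V)} (hs : s ⊆ P) :
    (s.image ρ).card = s.card :=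
  Finset.card_image_of_injOn fun x hx y hy h => hinj x (hs hx) y (hs hy) h

lemma img_inj {P : Finset (List V)} {ρ : List V → List V}
    (hinj : ∀ l ∈ P, ∀ m ∈ P, ρ l = ρ m → l = m) {s t : Finset (List V)}
    (hs : s ⊆ P) (ht : t ⊆ P) (h : s.image ρ = t.image ρ) : s = t := by
  ext x
  constructor
  · intro hx
    have hmem : ρ x ∈ t.image ρ := h ▸ Finset.mem_image_of_mem ρ hx
    obtain ⟨y, hy, hxy⟩ := Finset.mem_image.1 hmem
    rwa [hinj y (ht hy) x (hs hx) hxy] at hy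
  · intro hx
    have hmem : ρ x ∈ s.image ρ := h.symm ▸ Finset.mem_image_of_mem ρ hx
    obtain ⟨y, hy, hxy⟩ := Finset.mem_image.1 hmem
    rwa [hinj y (hs hy) x (ht hx) hxy] at hy

lemma step1 {G : SimpleGraph V} {S : Finset V} {P : Finset (List V)}
    (hG : Good G S P) {v u1 : V} (hv : v ∉ S) (hu1 : u1 ∈ S) (ha1 : G.Adj v u1)
    (hnb : ∀ x ∈ S, G.Adj v x → x = u1) :
    ∃ P', Good G (insert v S) P' ∧ P'.card = P.card + 1 := by
  obtain ⟨hPath, hSub, hCard2, hDist, hEnds⟩ := hG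
  obtain ⟨A, hA, s1, hsA⟩ := exists_end (hEnds u1 hu1)
  have hvl : ∀ l ∈ P, v ∉ l := fun l hl hvm => hv (hSub l hl v hvm)
  have hvA : v ∉ A := hvl A hA
  have hAne : A ≠ [] := endSel_some_ne_nil hsA
  have hvu1 : v ≠ u1 := fun h => hv (h ▸ hu1)
  set LA := pExt v s1 A with hLAdef
  set C := pExt v (!s1) [u1] with hCdef
  have hsC : endSel (!s1) ([u1] : List V) = some u1 := endSel_singleton _ u1
  -- ends of C
  have hCsel1 : endSel (!s1) C = some v := endSel_pExt_same v
  have hCsel2 : endSel s1 C = some u1 := by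
    have := endSel_pExt_other (s := !s1) (l := [u1]) v (by simp)
    rw [Bool.not_not] at this
    rw [hCdef, this, endSel_singleton]
  -- distinctness
  have hLAP : LA ∉ P := fun h => (hvl LA h) (v_mem_pExt v s1 A)
  have hCP : C ∉ P := fun h => (hvl C h) (v_mem_pExt v (!s1) [u1])
  have hCLA : C ≠ LA := by
    intro h
    have h2 : endSel s1 LA = some v := endSel_pExt_same v
    rw [h, h2] at hCsel2
    exact hvu1 (Option.some_inj.1 hCsel2)
  -- edge membership
  set e1 : Sym2 V := s(v, u1) with he1def
  have he1 : e1 ∈ G.edgeSet := ha1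
  have hemLA : ∀ e, edgeMemList e LA ↔ e = e1 ∨ edgeMemList e A :=
    fun e => edgeMem_pExt hsA
  have hemC : ∀ e, edgeMemList e C ↔ e = e1 := by
    intro e
    rw [hCdef, edgeMem_pExt hsC]
    simp [edgeMem_single, he1def]
  have he1LA : edgeMemList e1 LA := (hemLA e1).2 (Or.inl rfl)
  have he1C : edgeMemList e1 C := (hemC e1).2 rfl
  -- the renaming map
  set ρ : List V → List V := fun l => if l = A then LA else l with hρdef
  have hρA : ρ A = LA := by simp [hρdef]
  have hρother : ∀ l, l ≠ A → ρ l = l := by intro l h; simp [hρdef, h]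
  have hρinj : ∀ l ∈ P, ∀ m ∈ P, ρ l = ρ m → l = m := by
    intro l hl m hm h
    by_cases h1 : l = A <;> by_cases h2 : m = A
    · rw [h1, h2]
    · rw [h1, hρA, hρother m h2] at h
      exact absurd (by rw [h]; exact hm) hLAP
    · rw [h2, hρA, hρother l h1] at h
      exact absurd (by rw [← h]; exact hl) hLAP
    · rwa [hρother l h1, hρother m h2] at h
  set P' := insert C (insert LA (P.erase A)) with hP'def
  have hLAmem : LA ∉ P.erase A := fun h => hLAP (Finset.mem_of_mem_erase h)
  have hCmem : C ∉ insert LA (P.erase A) := by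
    simp only [Finset.mem_insert]
    rintro (h | h)
    · exact hCLA h
    · exact hCP (Finset.mem_of_mem_erase h)
  have hmemP' : ∀ l ∈ P', l = C ∨ l = LA ∨ (l ∈ P ∧ l ≠ A) := by
    intro l hl
    rcases Finset.mem_insert.1 hl with rfl | hl'
    · exact Or.inl rfl
    rcases Finset.mem_insert.1 hl' with rfl | hl''
    · exact Or.inr (Or.inl rfl)
    · exact Or.inr (Or.inr ⟨Finset.mem_of_mem_erase hl'', (Finset.mem_erase.1 hl'').1⟩)
  -- filter identities
  have hfilter_old : ∀ e : Sym2 V, v ∉ e →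
      P'.filter (fun l => edgeMemList e l) = (P.filter (fun l => edgeMemList e l)).image ρ := by
    intro e hve
    have hnotC : ¬ edgeMemList e C := fun h => hve ((hemC e).1 h ▸ Sym2.mem_mk_left v u1)
    have hLAiff : edgeMemList e LA ↔ edgeMemList e A := by
      rw [hemLA]
      constructor
      · rintro (rfl | h)
        · exact absurd (Sym2.mem_mk_left v u1) hve
        · exact h
      · exact Or.inr
    ext l
    simp only [Finset.mem_filter, Finset.mem_image]
    constructor
    · rintro ⟨hlP', hel⟩
      rcases hmemP' l hlP' with rfl | rfl | ⟨hlP, hlA⟩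
      · exact absurd hel hnotC
      · exact ⟨A, ⟨hA, hLAiff.1 hel⟩, hρA⟩
      · exact ⟨l, ⟨hlP, hel⟩, hρother l hlA⟩
    · rintro ⟨m, ⟨hmP, hem⟩, rfl⟩
      by_cases hmA : m = A
      · subst hmA
        rw [hρA]
        exact ⟨Finset.mem_insert.2 (Or.inr (Finset.mem_insert.2 (Or.inl rfl))),
          hLAiff.2 hem⟩
      · rw [hρother m hmA]
        exact ⟨Finset.mem_insert.2 (Or.inr (Finset.mem_insert.2 (Or.inr
          (Finset.mem_erase.2 ⟨hmA, hmP⟩)))), hem⟩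
  have hfilter_e1 : P'.filter (fun l => edgeMemList e1 l) = {C, LA} := by
    have hempty : (P.erase A).filter (fun l => edgeMemList e1 l) = ∅ := by
      rw [Finset.filter_eq_empty_iff]
      intro l hl
      exact not_edgeMem_of_not_mem (Sym2.mem_mk_left v u1) (hvl l (Finset.mem_of_mem_erase hl))
    rw [hP'def, Finset.filter_insert, if_pos he1C, Finset.filter_insert, if_pos he1LA, hempty]
    rfl
  refine ⟨P', ⟨?_, ?_, ?_, ?_, ?_⟩, ?_⟩
  · intro l hl
    rcases hmemP' l hl with rfl | rfl | ⟨hlP, _⟩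
    · exact isPathList_pExt ⟨by simp, List.isChain_singleton u1, by simp⟩ hsC ha1 (by simp [hvu1])
    · exact isPathList_pExt (hPath A hA) hsA ha1 hvA
    · exact hPath l hlP
  · intro l hl x hx
    rcases hmemP' l hl with rfl | rfl | ⟨hlP, _⟩
    · rcases mem_pExt.1 hx with rfl | hx'
      · exact Finset.mem_insert_self x S
      · simp only [List.mem_singleton] at hx'
        exact Finset.mem_insert.2 (Or.inr (hx' ▸ hu1))
    · rcases mem_pExt.1 hx with rfl | hx'
      · exact Finset.mem_insert_self x S
      · exact Finset.mem_insert.2 (Or.inr (hSub A hA x hx'))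
    · exact Finset.mem_insert.2 (Or.inr (hSub l hlP x hx))
  · intro e he hes
    by_cases hve : v ∈ e
    · obtain ⟨x, hxS, hadj, rfl⟩ := new_edge_class hv he hes hve
      have hx1 : x = u1 := hnb x hxS hadj
      rw [hx1]
      show (P'.filter (fun l => edgeMemList e1 l)).card = 2
      rw [hfilter_e1]
      rw [Finset.card_insert_of_notMem (by simp [hCLA]), Finset.card_singleton]
    · rw [hfilter_old e hve, img_card hρinj (Finset.filter_subset _ _)]
      exact hCard2 e he (mem_insert_edge hv he hes hve)
  · intro e he f hf hes hfs hef
    by_cases hve : v ∈ e <;> by_cases hvf : v ∈ f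
    · obtain ⟨x, hxS, hadj, rfl⟩ := new_edge_class hv he hes hve
      obtain ⟨y, hyS, hadj', rfl⟩ := new_edge_class hv hf hfs hvf
      rw [hnb x hxS hadj, hnb y hyS hadj'] at hef
      exact absurd rfl hef
    · obtain ⟨x, hxS, hadj, rfl⟩ := new_edge_class hv he hes hve
      have hx1 : x = u1 := hnb x hxS hadj
      intro h
      have hC2 : C ∈ P' := by rw [hP'def]; exact Finset.mem_insert_self _ _
      have hmemf : C ∈ P'.filter (fun l => edgeMemList f l) := by
        rw [← h]
        refine Finset.mem_filter.2 ⟨hC2, ?_⟩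
        rw [hx1]
        exact he1C
      have hfe : f = e1 := (hemC f).1 (Finset.mem_filter.1 hmemf).2
      exact hvf (by rw [hfe]; exact Sym2.mem_mk_left v u1)
    · obtain ⟨x, hxS, hadj, rfl⟩ := new_edge_class hv hf hfs hvf
      have hx1 : x = u1 := hnb x hxS hadj
      intro h
      have hC2 : C ∈ P' := by rw [hP'def]; exact Finset.mem_insert_self _ _
      have hmeme : C ∈ P'.filter (fun l => edgeMemList e l) := by
        rw [h]
        refine Finset.mem_filter.2 ⟨hC2, ?_⟩
        rw [hx1]
        exact he1C
      have hfe : e = e1 := (hemC e).1 (Finset.mem_filter.1 hmeme).2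
      exact hve (by rw [hfe]; exact Sym2.mem_mk_left v u1)
    · rw [hfilter_old e hve, hfilter_old f hvf]
      intro h
      exact hDist e he f hf (mem_insert_edge hv he hes hve) (mem_insert_edge hv hf hfs hvf) hef
        (img_inj hρinj (Finset.filter_subset _ _) (Finset.filter_subset _ _) h)
  · intro u hu
    have hsum : ∑ l ∈ P', endCount l u
        = endCount C u + (endCount LA u + ∑ l ∈ P.erase A, endCount l u) := by
      rw [hP'def, Finset.sum_insert hCmem, Finset.sum_insert hLAmem]
    have hold : endCount A u + ∑ l ∈ P.erase A, endCount l u = ∑ l ∈ P, endCount l u :=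
      Finset.add_sum_erase P (fun l => endCount l u) hA
    have hEA := endCount_pExt (v := v) (w := u) hsA
    rw [← hLAdef] at hEA
    have hEC := endCount_pExt (v := v) (w := u) hsC
    have hsingle : endCount ([u1] : List V) u
        = (if u1 = u then 1 else 0) + (if u1 = u then 1 else 0) := by
      simp [endCount]
    rw [← hCdef] at hEC
    rw [hsingle] at hEC
    rcases Finset.mem_insert.1 hu with rfl | huS
    · have hA0 : endCount A u = 0 := endCount_eq_zero hvA
      have hD0 : ∑ l ∈ P.erase A, endCount l u = 0 :=
        Finset.sum_eq_zero fun l hl => endCount_eq_zero (hvl l (Finset.mem_of_mem_erase hl))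
      rw [hsum, hD0]
      rw [hA0] at hEA
      have hne : ¬ (u1 = u) := fun h => hvu1 (h.symm)
      rw [if_neg hne, if_pos rfl] at hEA hEC
      omega
    · have hvu : v ≠ u := fun h => hv (h ▸ huS)
      have hPsum := hEnds u huS
      rw [hsum]
      rw [if_neg hvu] at hEA hEC
      rw [hPsum] at hold
      by_cases b1 : u1 = u
      · rw [if_pos b1] at hEA hEC
        omega
      · rw [if_neg b1] at hEA hEC
        omega
  · rw [hP'def, Finset.card_insert_of_notMem hCmem, Finset.card_insert_of_notMem hLAmem]
    have := Finset.card_erase_add_one hA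
    omega

end SepAux
namespace SepAux

variable {V : Type*}

lemma step2 {G : SimpleGraph V} {S : Finset V} {P : Finset (List V)}
    (hG : Good G S P) {v u1 u2 : V} (hv : v ∉ S) (hu1 : u1 ∈ S) (hu2 : u2 ∈ S)
    (h12 : u1 ≠ u2) (ha1 : G.Adj v u1) (ha2 : G.Adj v u2)
    (hnb : ∀ x ∈ S, G.Adj v x → x = u1 ∨ x = u2) :
    ∃ P', Good G (insert v S) P' ∧ P'.card = P.card + 1 := by
  obtain ⟨hPath, hSub, hCard2, hDist, hEnds⟩ := hG
  obtain ⟨A, hA, B, hB, hAB, s1, s2, hsA, hsB⟩ :=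
    exists_two_ends (hEnds u1 hu1) (hEnds u2 hu2) h12
  have hvl : ∀ l ∈ P, v ∉ l := fun l hl hvm => hv (hSub l hl v hvm)
  have hvA : v ∉ A := hvl A hA
  have hvB : v ∉ B := hvl B hB
  have hAne : A ≠ [] := endSel_some_ne_nil hsA
  have hBne : B ≠ [] := endSel_some_ne_nil hsB
  have hvu1 : v ≠ u1 := fun h => hv (h ▸ hu1)
  have hvu2 : v ≠ u2 := fun h => hv (h ▸ hu2)
  set LA := pExt v s1 A with hLAdef
  set LB := pExt v s2 B with hLBdef
  set C : List V := [u1, v, u2] with hCdef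
  have hCsel1 : endSel true C = some u1 := rfl
  have hCsel2 : endSel false C = some u2 := rfl
  -- distinctness
  have hLAP : LA ∉ P := fun h => (hvl LA h) (v_mem_pExt v s1 A)
  have hLBP : LB ∉ P := fun h => (hvl LB h) (v_mem_pExt v s2 B)
  have hCP : C ∉ P := fun h => hvl C h (by simp [hCdef])
  have hLALB : LA ≠ LB := by
    intro h
    cases s1 with
    | true =>
      cases s2 with
      | true =>
        simp only [hLAdef, hLBdef, pExt_true, List.cons.injEq] at h
        exact hAB h.2
      | false =>
        have h1 : LA.head? = some v := by simp [hLAdef]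
        have h2 : LB.head? = B.head? := by
          rw [hLBdef, pExt_false]; exact head?_append_ne v hBne
        rw [h, h2] at h1
        exact hvB (List.mem_of_mem_head? (by simp [h1]))
    | false =>
      cases s2 with
      | true =>
        have h1 : LB.head? = some v := by simp [hLBdef]
        have h2 : LA.head? = A.head? := by
          rw [hLAdef, pExt_false]; exact head?_append_ne v hAne
        rw [← h, h2] at h1
        exact hvA (List.mem_of_mem_head? (by simp [h1]))
      | false =>
        apply hAB
        have h' := congrArg List.reverse h
        simp only [hLAdef, hLBdef, pExt_false, List.reverse_append, List.reverse_cons,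
          List.reverse_nil, List.nil_append, List.cons_append, List.cons.injEq,
          List.nil_append] at h'
        exact List.reverse_injective h'.2
  have hCLA : C ≠ LA := by
    intro h
    have h2 : endSel s1 LA = some v := endSel_pExt_same v
    rw [← h] at h2
    cases s1 with
    | true => rw [hCsel1] at h2; exact hvu1 (Option.some_inj.1 h2).symm
    | false => rw [hCsel2] at h2; exact hvu2 (Option.some_inj.1 h2).symm
  have hCLB : C ≠ LB := by
    intro h
    have h2 : endSel s2 LB = some v := endSel_pExt_same v
    rw [← h] at h2
    cases s2 with
    | true => rw [hCsel1] at h2; exact hvu1 (Option.some_inj.1 h2).symm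
    | false => rw [hCsel2] at h2; exact hvu2 (Option.some_inj.1 h2).symm
  -- edges
  set e1 : Sym2 V := s(v, u1) with he1def
  set e2 : Sym2 V := s(v, u2) with he2def
  have he1 : e1 ∈ G.edgeSet := ha1
  have he2 : e2 ∈ G.edgeSet := ha2
  have he12 : e1 ≠ e2 := by
    rw [he1def, he2def]
    intro h
    rcases Sym2.eq_iff.1 h with ⟨-, h'⟩ | ⟨h', -⟩
    · exact h12 h'
    · exact hvu2 h'
  have hemC : ∀ e, edgeMemList e C ↔ e = s(u1, v) ∨ e = s(v, u2) :=
    fun e => edgeMem_triple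
  have hemLA : ∀ e, edgeMemList e LA ↔ e = e1 ∨ edgeMemList e A :=
    fun e => edgeMem_pExt hsA
  have hemLB : ∀ e, edgeMemList e LB ↔ e = e2 ∨ edgeMemList e B :=
    fun e => edgeMem_pExt hsB
  have he1C : edgeMemList e1 C := (hemC e1).2 (Or.inl Sym2.eq_swap)
  have he2C : edgeMemList e2 C := (hemC e2).2 (Or.inr rfl)
  have he1LA : edgeMemList e1 LA := (hemLA e1).2 (Or.inl rfl)
  have he2LB : edgeMemList e2 LB := (hemLB e2).2 (Or.inl rfl)
  have he2LA : ¬ edgeMemList e2 LA := by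
    rw [hemLA]
    rintro (h | h)
    · exact he12 h.symm
    · exact not_edgeMem_of_not_mem (Sym2.mem_mk_left v u2) hvA h
  have he1LB : ¬ edgeMemList e1 LB := by
    rw [hemLB]
    rintro (h | h)
    · exact he12 h
    · exact not_edgeMem_of_not_mem (Sym2.mem_mk_left v u1) hvB h
  -- the renaming map
  set ρ : List V → List V := fun l => if l = A then LA else if l = B then LB else l with hρdef
  have hρA : ρ A = LA := by simp [hρdef]
  have hρB : ρ B = LB := by
    simp [hρdef, Ne.symm hAB]
  have hρother : ∀ l, l ≠ A → l ≠ B → ρ l = l := by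
    intro l h h'
    simp [hρdef, h, h']
  have hρinj : ∀ l ∈ P, ∀ m ∈ P, ρ l = ρ m → l = m := by
    intro l hl m hm h
    by_cases h1 : l = A
    · by_cases h2 : m = A
      · rw [h1, h2]
      · by_cases h3 : m = B
        · rw [h1, hρA, h3, hρB] at h
          exact absurd h hLALB
        · rw [h1, hρA, hρother m h2 h3] at h
          exact absurd (by rw [h]; exact hm) hLAP
    · by_cases h4 : l = B
      · by_cases h2 : m = A
        · rw [h4, hρB, h2, hρA] at h
          exact absurd h.symm hLALB
        · by_cases h3 : m = B
          · rw [h4, h3]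
          · rw [h4, hρB, hρother m h2 h3] at h
            exact absurd (by rw [h]; exact hm) hLBP
      · by_cases h2 : m = A
        · rw [h2, hρA, hρother l h1 h4] at h
          exact absurd (by rw [← h]; exact hl) hLAP
        · by_cases h3 : m = B
          · rw [h3, hρB, hρother l h1 h4] at h
            exact absurd (by rw [← h]; exact hl) hLBP
          · rwa [hρother l h1 h4, hρother m h2 h3] at h
  -- the new system
  have hBA' : B ∈ P.erase A := Finset.mem_erase.2 ⟨Ne.symm hAB, hB⟩
  set D := (P.erase A).erase B with hDdef
  have hDfacts : ∀ l ∈ D, l ∈ P ∧ l ≠ A ∧ l ≠ B := by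
    intro l hl
    obtain ⟨h1, h2⟩ := Finset.mem_erase.1 hl
    obtain ⟨h3, h4⟩ := Finset.mem_erase.1 h2
    exact ⟨h4, h3, h1⟩
  have hLBD : LB ∉ D := fun h => hLBP (hDfacts LB h).1
  have hLAmem : LA ∉ insert LB D := by
    simp only [Finset.mem_insert]
    rintro (h | h)
    · exact hLALB h
    · exact hLAP (hDfacts LA h).1
  have hCmem : C ∉ insert LA (insert LB D) := by
    simp only [Finset.mem_insert]
    rintro (h | h | h)
    · exact hCLA h
    · exact hCLB h
    · exact hCP (hDfacts C h).1
  set P' := insert C (insert LA (insert LB D)) with hP'def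
  have hmemP' : ∀ l ∈ P', l = C ∨ l = LA ∨ l = LB ∨ (l ∈ P ∧ l ≠ A ∧ l ≠ B) := by
    intro l hl
    rcases Finset.mem_insert.1 hl with rfl | hl'
    · exact Or.inl rfl
    rcases Finset.mem_insert.1 hl' with rfl | hl''
    · exact Or.inr (Or.inl rfl)
    rcases Finset.mem_insert.1 hl'' with rfl | hlD
    · exact Or.inr (Or.inr (Or.inl rfl))
    · exact Or.inr (Or.inr (Or.inr (hDfacts l hlD)))
  have hLAP' : LA ∈ P' := by
    rw [hP'def]
    exact Finset.mem_insert.2 (Or.inr (Finset.mem_insert_self _ _))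
  have hLBP' : LB ∈ P' := by
    rw [hP'def]
    exact Finset.mem_insert.2 (Or.inr (Finset.mem_insert.2 (Or.inr (Finset.mem_insert_self _ _))))
  have hCP' : C ∈ P' := by
    rw [hP'def]; exact Finset.mem_insert_self _ _
  have hDP' : ∀ l ∈ P, l ≠ A → l ≠ B → l ∈ P' := by
    intro l hl h1 h2
    rw [hP'def]
    refine Finset.mem_insert.2 (Or.inr (Finset.mem_insert.2 (Or.inr (Finset.mem_insert.2
      (Or.inr ?_)))))
    exact Finset.mem_erase.2 ⟨h2, Finset.mem_erase.2 ⟨h1, hl⟩⟩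
  -- filters for old edges
  have hfilter_old : ∀ e : Sym2 V, v ∉ e →
      P'.filter (fun l => edgeMemList e l) = (P.filter (fun l => edgeMemList e l)).image ρ := by
    intro e hve
    have hnotC : ¬ edgeMemList e C := by
      intro h
      rcases (hemC e).1 h with rfl | rfl
      · exact hve (Sym2.mem_mk_right u1 v)
      · exact hve (Sym2.mem_mk_left v u2)
    have hLAiff : edgeMemList e LA ↔ edgeMemList e A := by
      rw [hemLA]
      constructor
      · rintro (rfl | h)
        · exact absurd (Sym2.mem_mk_left v u1) hve
        · exact h
      · exact Or.inr
    have hLBiff : edgeMemList e LB ↔ edgeMemList e B := by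
      rw [hemLB]
      constructor
      · rintro (rfl | h)
        · exact absurd (Sym2.mem_mk_left v u2) hve
        · exact h
      · exact Or.inr
    ext l
    simp only [Finset.mem_filter, Finset.mem_image]
    constructor
    · rintro ⟨hlP', hel⟩
      rcases hmemP' l hlP' with rfl | rfl | rfl | ⟨hlP, hlA, hlB⟩
      · exact absurd hel hnotC
      · exact ⟨A, ⟨hA, hLAiff.1 hel⟩, hρA⟩
      · exact ⟨B, ⟨hB, hLBiff.1 hel⟩, hρB⟩
      · exact ⟨l, ⟨hlP, hel⟩, hρother l hlA hlB⟩
    · rintro ⟨m, ⟨hmP, hem⟩, rfl⟩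
      by_cases hmA : m = A
      · rw [hmA, hρA]
        exact ⟨hLAP', hLAiff.2 (hmA ▸ hem)⟩
      by_cases hmB : m = B
      · rw [hmB, hρB]
        exact ⟨hLBP', hLBiff.2 (hmB ▸ hem)⟩
      · rw [hρother m hmA hmB]
        exact ⟨hDP' m hmP hmA hmB, hem⟩
  -- filters for the new edges
  have hDe : ∀ (e : Sym2 V), v ∈ e → D.filter (fun l => edgeMemList e l) = ∅ := by
    intro e hve
    rw [Finset.filter_eq_empty_iff]
    intro l hl
    exact not_edgeMem_of_not_mem hve (hvl l (hDfacts l hl).1)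
  have hfilter_e1 : P'.filter (fun l => edgeMemList e1 l) = {C, LA} := by
    rw [hP'def, Finset.filter_insert, if_pos he1C, Finset.filter_insert, if_pos he1LA,
      Finset.filter_insert, if_neg he1LB, hDe e1 (Sym2.mem_mk_left v u1)]
    rfl
  have hfilter_e2 : P'.filter (fun l => edgeMemList e2 l) = {C, LB} := by
    rw [hP'def, Finset.filter_insert, if_pos he2C, Finset.filter_insert, if_neg he2LA,
      Finset.filter_insert, if_pos he2LB, hDe e2 (Sym2.mem_mk_left v u2)]
    rfl
  have hnewfilter : ∀ e : Sym2 V, e ∈ G.edgeSet → (∀ x ∈ e, x ∈ insert v S) → v ∈ e →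
      (e = e1 ∧ P'.filter (fun l => edgeMemList e l) = {C, LA}) ∨
      (e = e2 ∧ P'.filter (fun l => edgeMemList e l) = {C, LB}) := by
    intro e he hes hve
    obtain ⟨x, hxS, hadj, rfl⟩ := new_edge_class hv he hes hve
    rcases hnb x hxS hadj with rfl | rfl
    · exact Or.inl ⟨rfl, hfilter_e1⟩
    · exact Or.inr ⟨rfl, hfilter_e2⟩
  refine ⟨P', ⟨?_, ?_, ?_, ?_, ?_⟩, ?_⟩
  · -- paths
    intro l hl
    rcases hmemP' l hl with rfl | rfl | rfl | ⟨hlP, -, -⟩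
    · refine ⟨by simp [hCdef], ?_, ?_⟩
      · rw [hCdef]
        exact List.isChain_cons_cons.2 ⟨ha1.symm, List.isChain_cons_cons.2 ⟨ha2, List.isChain_singleton u2⟩⟩
      · rw [hCdef]
        simp [hvu1, hvu2, h12, List.nodup_cons]
        exact fun h => hvu1 h.symm
    · exact isPathList_pExt (hPath A hA) hsA ha1 hvA
    · exact isPathList_pExt (hPath B hB) hsB ha2 hvB
    · exact hPath l hlP
  · -- vertices
    intro l hl x hx
    rcases hmemP' l hl with rfl | rfl | rfl | ⟨hlP, -, -⟩
    · rw [hCdef] at hx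
      simp only [List.mem_cons, List.not_mem_nil, or_false] at hx
      rcases hx with rfl | rfl | rfl
      · exact Finset.mem_insert.2 (Or.inr hu1)
      · exact Finset.mem_insert_self x S
      · exact Finset.mem_insert.2 (Or.inr hu2)
    · rcases mem_pExt.1 hx with rfl | hx'
      · exact Finset.mem_insert_self x S
      · exact Finset.mem_insert.2 (Or.inr (hSub A hA x hx'))
    · rcases mem_pExt.1 hx with rfl | hx'
      · exact Finset.mem_insert_self x S
      · exact Finset.mem_insert.2 (Or.inr (hSub B hB x hx'))
    · exact Finset.mem_insert.2 (Or.inr (hSub l hlP x hx))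
  · -- card 2
    intro e he hes
    by_cases hve : v ∈ e
    · rcases hnewfilter e he hes hve with ⟨-, hfil⟩ | ⟨-, hfil⟩
      · rw [hfil, Finset.card_insert_of_notMem (by simp [hCLA]), Finset.card_singleton]
      · rw [hfil, Finset.card_insert_of_notMem (by simp [hCLB]), Finset.card_singleton]
    · rw [hfilter_old e hve, img_card hρinj (Finset.filter_subset _ _)]
      exact hCard2 e he (mem_insert_edge hv he hes hve)
  · -- distinct filters
    intro e he f hf hes hfs hef
    by_cases hve : v ∈ e <;> by_cases hvf : v ∈ f
    · rcases hnewfilter e he hes hve with ⟨rfl, hfe⟩ | ⟨rfl, hfe⟩ <;>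
        rcases hnewfilter f hf hfs hvf with ⟨rfl, hff⟩ | ⟨rfl, hff⟩
      · exact absurd rfl hef
      · rw [hfe, hff]
        intro h
        have : LA ∈ ({C, LB} : Finset (List V)) := by
          rw [← h]; simp
        rcases Finset.mem_insert.1 this with h' | h'
        · exact hCLA h'.symm
        · exact hLALB (Finset.mem_singleton.1 h')
      · rw [hfe, hff]
        intro h
        have : LA ∈ ({C, LB} : Finset (List V)) := by
          rw [h]; simp
        rcases Finset.mem_insert.1 this with h' | h'
        · exact hCLA h'.symm
        · exact hLALB (Finset.mem_singleton.1 h')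
      · exact absurd rfl hef
    · intro h
      have hCe : edgeMemList e C := by
        rcases hnewfilter e he hes hve with ⟨rfl, -⟩ | ⟨rfl, -⟩
        · exact he1C
        · exact he2C
      have hmemf : C ∈ P'.filter (fun l => edgeMemList f l) := by
        rw [← h]
        exact Finset.mem_filter.2 ⟨hCP', hCe⟩
      have hfC : edgeMemList f C := (Finset.mem_filter.1 hmemf).2
      rcases (hemC f).1 hfC with rfl | rfl
      · exact hvf (Sym2.mem_mk_right u1 v)
      · exact hvf (Sym2.mem_mk_left v u2)
    · intro h
      have hCf : edgeMemList f C := by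
        rcases hnewfilter f hf hfs hvf with ⟨rfl, -⟩ | ⟨rfl, -⟩
        · exact he1C
        · exact he2C
      have hmeme : C ∈ P'.filter (fun l => edgeMemList e l) := by
        rw [h]
        exact Finset.mem_filter.2 ⟨hCP', hCf⟩
      have heC : edgeMemList e C := (Finset.mem_filter.1 hmeme).2
      rcases (hemC e).1 heC with rfl | rfl
      · exact hve (Sym2.mem_mk_right u1 v)
      · exact hve (Sym2.mem_mk_left v u2)
    · rw [hfilter_old e hve, hfilter_old f hvf]
      intro h
      exact hDist e he f hf (mem_insert_edge hv he hes hve) (mem_insert_edge hv hf hfs hvf) hef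
        (img_inj hρinj (Finset.filter_subset _ _) (Finset.filter_subset _ _) h)
  · -- end counts
    intro u hu
    have hsum : ∑ l ∈ P', endCount l u
        = endCount C u + (endCount LA u + (endCount LB u + ∑ l ∈ D, endCount l u)) := by
      rw [hP'def, Finset.sum_insert hCmem, Finset.sum_insert hLAmem, Finset.sum_insert hLBD]
    have hold2 : endCount B u + ∑ l ∈ D, endCount l u = ∑ l ∈ P.erase A, endCount l u := by
      rw [hDdef]
      exact Finset.add_sum_erase _ (fun l => endCount l u) hBA'
    have hold1 : endCount A u + ∑ l ∈ P.erase A, endCount l u = ∑ l ∈ P, endCount l u :=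
      Finset.add_sum_erase P (fun l => endCount l u) hA
    have hEA := endCount_pExt (v := v) (w := u) hsA
    rw [← hLAdef] at hEA
    have hEB := endCount_pExt (v := v) (w := u) hsB
    rw [← hLBdef] at hEB
    have hCcount : endCount C u = (if u1 = u then 1 else 0) + (if u2 = u then 1 else 0) := by
      rw [hCdef]
      simp [endCount]
    rcases Finset.mem_insert.1 hu with rfl | huS
    · have hA0 : endCount A u = 0 := endCount_eq_zero hvA
      have hB0 : endCount B u = 0 := endCount_eq_zero hvB
      have hD0 : ∑ l ∈ D, endCount l u = 0 :=
        Finset.sum_eq_zero fun l hl => endCount_eq_zero (hvl l (hDfacts l hl).1)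
      rw [hsum, hD0, hCcount, if_neg (fun h => hvu1 h.symm), if_neg (fun h => hvu2 h.symm)]
      rw [hA0, if_neg (fun h => hvu1 h.symm), if_pos rfl] at hEA
      rw [hB0, if_neg (fun h => hvu2 h.symm), if_pos rfl] at hEB
      omega
    · have hvu : v ≠ u := fun h => hv (h ▸ huS)
      have hPsum := hEnds u huS
      rw [hsum, hCcount]
      rw [if_neg hvu] at hEA hEB
      rw [hPsum] at hold1
      by_cases b1 : u1 = u <;> by_cases b2 : u2 = u
      · exact absurd (b1.trans b2.symm) h12
      · rw [if_pos b1] at hEA ⊢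
        rw [if_neg b2] at hEB ⊢
        omega
      · rw [if_neg b1] at hEA ⊢
        rw [if_pos b2] at hEB ⊢
        omega
      · rw [if_neg b1] at hEA ⊢
        rw [if_neg b2] at hEB ⊢
        omega
  · -- cardinality
    rw [hP'def, Finset.card_insert_of_notMem hCmem, Finset.card_insert_of_notMem hLAmem,
      Finset.card_insert_of_notMem hLBD]
    have c1 := Finset.card_erase_add_one hA
    have c2 := Finset.card_erase_add_one hBA'
    rw [← hDdef] at c2
    omega

end SepAux
namespace SepAux

variable {V : Type*}

lemma good_empty (G : SimpleGraph V) : Good G ∅ ∅ := by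
  refine ⟨by simp, by simp, ?_, ?_, by simp⟩
  · intro e he hes
    exact absurd (hes (Quot.out e).1 (Sym2.out_fst_mem e)) (Finset.notMem_empty _)
  · intro e he f hf hes hfs hef
    exact absurd (hes (Quot.out e).1 (Sym2.out_fst_mem e)) (Finset.notMem_empty _)

lemma main_induction (G : SimpleGraph V) (hG : TwoDegenerate G) :
    ∀ (n : ℕ) (S : Finset V), S.card ≤ n → ∃ P, Good G S P ∧ P.card = S.card := by
  intro n
  induction n with
  | zero =>
    intro S hS
    have : S = ∅ := Finset.card_eq_zero.1 (Nat.le_zero.1 hS)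
    subst this
    exact ⟨∅, good_empty G, by simp⟩
  | succ n IH =>
    intro S hS
    rcases Finset.eq_empty_or_nonempty S with rfl | hSne
    · exact ⟨∅, good_empty G, by simp⟩
    obtain ⟨v, hvS', hdeg⟩ := hG (↑S) (Finset.coe_nonempty.2 hSne)
    have hvS : v ∈ S := hvS'
    set S' := S.erase v with hS'def
    have hvnot : v ∉ S' := Finset.notMem_erase v S
    have hcard' : S'.card + 1 = S.card := Finset.card_erase_add_one hvS
    obtain ⟨P, hGood, hPcard⟩ := IH S' (by omega)
    set Nf := S'.filter (fun u => G.Adj v u) with hNfdef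
    have hNfco : (↑Nf : Set V) = {u | u ∈ (↑S : Set V) ∧ G.Adj v u} := by
      ext u
      simp only [hNfdef, Finset.coe_filter, Set.mem_setOf_eq, hS'def, Finset.mem_erase,
        Finset.mem_coe]
      constructor
      · rintro ⟨⟨-, h1⟩, h2⟩
        exact ⟨h1, h2⟩
      · rintro ⟨h1, h2⟩
        exact ⟨⟨h2.ne', h1⟩, h2⟩
    have hNcard : Nf.card ≤ 2 := by
      rw [← Set.ncard_coe_finset, hNfco]
      exact hdeg
    have hmemNf : ∀ x, x ∈ Nf ↔ (x ∈ S' ∧ G.Adj v x) := by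
      intro x
      simp [hNfdef]
    have hins : insert v S' = S := Finset.insert_erase hvS
    by_cases h0 : Nf.card = 0
    · have hNf : Nf = ∅ := Finset.card_eq_zero.1 h0
      obtain ⟨P', hP'good, hP'card⟩ := step0 hGood hvnot
        (fun x hx hadj => absurd ((hmemNf x).2 ⟨hx, hadj⟩) (by simp [hNf]))
      rw [hins] at hP'good
      exact ⟨P', hP'good, by omega⟩
    by_cases h1 : Nf.card = 1
    · obtain ⟨u1, hNf⟩ := Finset.card_eq_one.1 h1
      have hu1 : u1 ∈ Nf := by simp [hNf]
      obtain ⟨hu1S, hadj1⟩ := (hmemNf u1).1 hu1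
      obtain ⟨P', hP'good, hP'card⟩ := step1 hGood hvnot hu1S hadj1
        (fun x hx hadj => by
          have := (hmemNf x).2 ⟨hx, hadj⟩
          rw [hNf] at this
          exact Finset.mem_singleton.1 this)
      rw [hins] at hP'good
      exact ⟨P', hP'good, by omega⟩
    · have h2 : Nf.card = 2 := by omega
      obtain ⟨u1, u2, hne, hNf⟩ := Finset.card_eq_two.1 h2
      have hu1 : u1 ∈ Nf := by simp [hNf]
      have hu2 : u2 ∈ Nf := by simp [hNf]
      obtain ⟨hu1S, hadj1⟩ := (hmemNf u1).1 hu1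
      obtain ⟨hu2S, hadj2⟩ := (hmemNf u2).1 hu2
      obtain ⟨P', hP'good, hP'card⟩ := step2 hGood hvnot hu1S hu2S hne hadj1 hadj2
        (fun x hx hadj => by
          have := (hmemNf x).2 ⟨hx, hadj⟩
          rw [hNf] at this
          simpa using this)
      rw [hins] at hP'good
      exact ⟨P', hP'good, by omega⟩

end SepAux
/-- For every 2-degenerate graph `G` on `n` vertices,
`ssp(G) ≤ n`. -/
theorem ssp_le_card_of_twoDegenerate {V : Type*} [Fintype V]
    (G : SimpleGraph V) (hG : TwoDegenerate G) :
    ssp G ≤ Fintype.card V := by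
  obtain ⟨P, hGood, hPcard⟩ :=
    SepAux.main_induction G hG (Fintype.card V) Finset.univ (by rw [Finset.card_univ])
  obtain ⟨hPath, hSub, hCard2, hDist, hEnds⟩ := hGood
  have hSS : StronglySeparating G P := by
    refine ⟨hPath, ?_⟩
    intro e he f hf hef
    have h2e := hCard2 e he (fun x _ => Finset.mem_univ x)
    have h2f := hCard2 f hf (fun x _ => Finset.mem_univ x)
    have hne := hDist e he f hf (fun x _ => Finset.mem_univ x) (fun x _ => Finset.mem_univ x) hef
    constructor
    · have hns : ¬ (P.filter (fun l => edgeMemList e l) ⊆ P.filter (fun l => edgeMemList f l)) := by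
        intro hsub
        exact hne (Finset.eq_of_subset_of_card_le hsub (by rw [h2e, h2f]))
      obtain ⟨l, hl, hlf⟩ := Finset.not_subset.1 hns
      obtain ⟨hlP, hle⟩ := Finset.mem_filter.1 hl
      exact ⟨l, hlP, hle, fun hlf' => hlf (Finset.mem_filter.2 ⟨hlP, hlf'⟩)⟩
    · have hns : ¬ (P.filter (fun l => edgeMemList f l) ⊆ P.filter (fun l => edgeMemList e l)) := by
        intro hsub
        exact hne.symm (Finset.eq_of_subset_of_card_le hsub (by rw [h2e, h2f]))
      obtain ⟨l, hl, hlf⟩ := Finset.not_subset.1 hns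
      obtain ⟨hlP, hle⟩ := Finset.mem_filter.1 hl
      exact ⟨l, hlP, hle, fun hlf' => hlf (Finset.mem_filter.2 ⟨hlP, hlf'⟩)⟩
  exact Nat.sInf_le ⟨P, hSS, by rw [hPcard, Finset.card_univ]⟩
end

section
/- For every connected 2-degenerate graph G on n ≥ 3 vertices, there exists a strongly separating path system for G consisting of exactly n paths such that every edge of G lies in exactly two of the paths, and for each vertex v of G exactly two of the paths have v as an endpoint. -/
open scoped Classical

section Aux

variable {V : Type*} {G : SimpleGraph V}

lemma mem_zip_tail_iff {p : V × V} : ∀ {l : List V},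
    p ∈ l.zip l.tail ↔ ∃ l1 l2, l = l1 ++ p.1 :: p.2 :: l2 := by
  intro l
  induction l with
  | nil => simp
  | cons x t ih =>
    cases t with
    | nil =>
      simp only [List.tail, List.zip_nil_right, List.not_mem_nil, false_iff]
      rintro ⟨l1, l2, h⟩
      rcases l1 with _ | ⟨y, l1⟩ <;> simp_all
    | cons y t' =>
      simp only [List.tail, List.zip_cons_cons, List.mem_cons]
      constructor
      · rintro (h | h)
        · subst h; exact ⟨[], t', by simp⟩
        · obtain ⟨l1, l2, hl⟩ := ih.1 (by simpa using h)
          exact ⟨x :: l1, l2, by simp [hl]⟩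
      · rintro ⟨l1, l2, hl⟩
        rcases l1 with _ | ⟨z, l1⟩
        · left; simp at hl; simp [hl.1, hl.2.1]
        · right
          simp only [List.cons_append, List.cons.injEq] at hl
          exact ih.2 ⟨l1, l2, hl.2⟩

lemma edgeMemList_iff {e : Sym2 V} {l : List V} :
    edgeMemList e l ↔ ∃ u w l1 l2, l = l1 ++ u :: w :: l2 ∧ Sym2.mk u w = e := by
  constructor
  · rintro ⟨p, hp, rfl⟩
    obtain ⟨l1, l2, h⟩ := mem_zip_tail_iff.1 hp
    exact ⟨p.1, p.2, l1, l2, h, rfl⟩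
  · rintro ⟨u, w, l1, l2, h, rfl⟩
    exact ⟨(u, w), mem_zip_tail_iff.2 ⟨l1, l2, h⟩, rfl⟩

lemma edgeMemList_reverse {e : Sym2 V} {l : List V} :
    edgeMemList e l.reverse ↔ edgeMemList e l := by
  have key : ∀ m : List V, edgeMemList e m → edgeMemList e m.reverse := by
    intro m hm
    obtain ⟨u, w, l1, l2, rfl, he⟩ := edgeMemList_iff.1 hm
    refine edgeMemList_iff.2 ⟨w, u, l2.reverse, l1.reverse, ?_, by rw [← he]; exact Sym2.eq_swap⟩
    simp
  constructor
  · intro h; simpa using key _ h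
  · exact key l


lemma mem_of_edgeMemList {e : Sym2 V} {l : List V} (h : edgeMemList e l) {x : V}
    (hx : x ∈ e) : x ∈ l := by
  obtain ⟨p, hp, rfl⟩ := h
  have h1 := List.of_mem_zip hp
  rcases Sym2.mem_iff.1 hx with rfl | rfl
  · exact h1.1
  · exact List.mem_of_mem_tail h1.2

lemma edgeMemList_cons {e : Sym2 V} {v a : V} {t : List V} :
    edgeMemList e (v :: a :: t) ↔ e = Sym2.mk v a ∨ edgeMemList e (a :: t) := by
  simp only [edgeMemList, List.tail, List.zip_cons_cons, List.mem_cons]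
  constructor
  · rintro ⟨p, hp | hp, rfl⟩
    · left; rw [hp]
    · right; exact ⟨p, hp, rfl⟩
  · rintro (rfl | ⟨p, hp, rfl⟩)
    · exact ⟨(v, a), Or.inl rfl, rfl⟩
    · exact ⟨p, Or.inr hp, rfl⟩

lemma edgeMemList_singleton {e : Sym2 V} {v : V} : ¬ edgeMemList e [v] := by
  rintro ⟨p, hp, _⟩; simp at hp

lemma isEndpointOf_reverse {u : V} {l : List V} :
    IsEndpointOf u l.reverse ↔ IsEndpointOf u l := by
  unfold IsEndpointOf
  rw [List.head?_reverse, List.getLast?_reverse]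
  exact or_comm

lemma isPathList_reverse {l : List V} :
    IsPathList G l.reverse ↔ IsPathList G l := by
  unfold IsPathList
  have flipadj : (flip G.Adj) = G.Adj := by
    funext x y; exact propext ⟨fun h => h.symm, fun h => h.symm⟩
  unfold List.Chain'
  rw [List.isChain_reverse, show (fun a b => G.Adj b a) = G.Adj from flipadj]
  simp

/-- orient a list so that the designated endpoint is at the head -/
noncomputable def orient (a : V) (l : List V) : List V :=
  if l.head? = some a then l else l.reverse

lemma head?_orient {a : V} {l : List V} (h : IsEndpointOf a l) :
    (orient a l).head? = some a := by
  by_cases hh : l.head? = some a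
  · simp [orient, hh]
  · rcases h with h | h
    · exact absurd h hh
    · simp [orient, hh, List.head?_reverse, h]

lemma edgeMemList_orient {e : Sym2 V} {a : V} {l : List V} :
    edgeMemList e (orient a l) ↔ edgeMemList e l := by
  unfold orient; split
  · rfl
  · exact edgeMemList_reverse

lemma isEndpointOf_orient {u a : V} {l : List V} :
    IsEndpointOf u (orient a l) ↔ IsEndpointOf u l := by
  unfold orient; split
  · rfl
  · exact isEndpointOf_reverse

lemma mem_orient {x a : V} {l : List V} : x ∈ orient a l ↔ x ∈ l := by
  unfold orient; split
  · rfl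
  · exact List.mem_reverse

lemma isPathList_orient {a : V} {l : List V} :
    IsPathList G (orient a l) ↔ IsPathList G l := by
  unfold orient; split
  · rfl
  · exact isPathList_reverse

lemma length_orient {a : V} {l : List V} : (orient a l).length = l.length := by
  unfold orient; split
  · rfl
  · exact List.length_reverse

lemma mem_of_getLast?' {l : List V} {a : V} (h : l.getLast? = some a) : a ∈ l := by
  obtain ⟨t, rfl⟩ := List.getLast?_eq_some_iff.mp h
  simp

lemma orient_cons {a : V} {l : List V} (ha : IsEndpointOf a l) (hlen : 2 ≤ l.length) :
    ∃ m', orient a l = a :: m' ∧ m' ≠ [] := by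
  have hh := head?_orient ha
  rcases hm : orient a l with _ | ⟨b, m'⟩
  · rw [hm] at hh; simp at hh
  · rw [hm] at hh
    simp only [List.head?_cons, Option.some.injEq] at hh
    refine ⟨m', by rw [hh], ?_⟩
    have hthis : (orient a l).length = l.length := length_orient
    rw [hm] at hthis
    rintro rfl
    simp at hthis
    omega

/-- the other endpoint of an oriented path -/
lemma exists_other_endpoint {a : V} {l : List V} (hp : IsPathList G l)
    (hlen : 2 ≤ l.length) (ha : IsEndpointOf a l) :
    ∃ w, w ≠ a ∧ w ∈ l ∧ (orient a l).getLast? = some w ∧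
      ∀ u, IsEndpointOf u l ↔ u = a ∨ u = w := by
  obtain ⟨m', hm, hm'⟩ := orient_cons ha hlen
  have hpm : IsPathList G (orient a l) := isPathList_orient.2 hp
  obtain ⟨w, hw⟩ : ∃ w, m'.getLast? = some w := by
    rcases hx : m'.getLast? with _ | w
    · rw [List.getLast?_eq_none_iff] at hx; exact absurd hx hm'
    · exact ⟨w, rfl⟩
  have hlast : (orient a l).getLast? = some w := by
    rw [hm, List.getLast?_cons, hw]; simp [List.getLast?_eq_none_iff.mpr, hm']
  refine ⟨w, ?_, ?_, hlast, ?_⟩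
  · have hnd := hpm.2.2
    rw [hm] at hnd
    have : a ∉ m' := (List.nodup_cons.1 hnd).1
    intro hwa; subst hwa
    exact this (mem_of_getLast?' hw)
  · have : w ∈ orient a l := mem_of_getLast?' hlast
    exact mem_orient.1 this
  · intro u
    rw [← isEndpointOf_orient (a := a)]
    unfold IsEndpointOf
    rw [head?_orient ha, hlast]
    constructor
    · rintro (h | h) <;> [left; right] <;> exact (Option.some.injEq _ _ ▸ h).symm
    · rintro (rfl | rfl) <;> [left; right] <;> rfl

/-- extend a path by new vertex `v` attached at endpoint `a` -/
noncomputable def extPath (v a : V) (l : List V) : List V := v :: orient a l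

section ext
variable {v a : V} {l : List V}

lemma mem_extPath {x : V} : x ∈ extPath v a l ↔ x = v ∨ x ∈ l := by
  simp [extPath, mem_orient]

lemma length_extPath : (extPath v a l).length = l.length + 1 := by
  simp [extPath, length_orient]

lemma extPath_ne_nil : extPath v a l ≠ [] := by simp [extPath]

lemma isPathList_extPath (hp : IsPathList G l) (hlen : 2 ≤ l.length)
    (ha : IsEndpointOf a l) (hv : v ∉ l) (hadj : G.Adj v a) :
    IsPathList G (extPath v a l) := by
  have hpm : IsPathList G (orient a l) := isPathList_orient.2 hp
  refine ⟨by simp [extPath], ?_, ?_⟩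
  · unfold List.Chain'
    rw [extPath, List.isChain_cons]
    refine ⟨?_, hpm.2.1⟩
    intro y hy
    rw [head?_orient ha] at hy
    simp only [Option.mem_def, Option.some.injEq] at hy
    subst hy; exact hadj
  · rw [extPath, List.nodup_cons]
    exact ⟨fun hc => hv (mem_orient.1 hc), hpm.2.2⟩

lemma edgeMemList_extPath (ha : IsEndpointOf a l) (hlen : 2 ≤ l.length) {e : Sym2 V} :
    edgeMemList e (extPath v a l) ↔ e = Sym2.mk v a ∨ edgeMemList e l := by
  obtain ⟨m', hm, hm'⟩ := orient_cons ha hlen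
  rw [extPath, hm, edgeMemList_cons, ← hm, edgeMemList_orient]

lemma isEndpointOf_extPath (ha : IsEndpointOf a l) (hlen : 2 ≤ l.length)
    {w : V} (hw : (orient a l).getLast? = some w) {u : V} :
    IsEndpointOf u (extPath v a l) ↔ u = v ∨ u = w := by
  unfold IsEndpointOf extPath
  rw [List.head?_cons, List.getLast?_cons, hw]
  simp only [Option.getD_some, Option.some.injEq]
  constructor
  · rintro (h | h)
    · left; exact h.symm
    · right; exact h.symm
  · rintro (rfl | rfl)
    · left; rfl
    · right; rfl
end ext

/-- exactly two members of `P` satisfy `prop` -/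
def ExactlyTwo (P : Finset (List V)) (prop : List V → Prop) : Prop :=
  ∃ l1 ∈ P, ∃ l2 ∈ P, l1 ≠ l2 ∧ prop l1 ∧ prop l2 ∧ ∀ l ∈ P, prop l → l = l1 ∨ l = l2

lemma ExactlyTwo.card_filter {P : Finset (List V)} {prop : List V → Prop}
    (h : ExactlyTwo P prop) : (P.filter prop).card = 2 := by
  obtain ⟨l1, h1, l2, h2, hne, hp1, hp2, huniq⟩ := h
  have : P.filter prop = {l1, l2} := by
    ext l
    simp only [Finset.mem_filter, Finset.mem_insert, Finset.mem_singleton]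
    constructor
    · rintro ⟨hl, hp⟩; exact huniq l hl hp
    · rintro (rfl | rfl) <;> exact ⟨by assumption, by assumption⟩
  rw [this, Finset.card_pair hne]

/-- the full invariant carried through the induction -/
def Good (G : SimpleGraph V) (s : Finset V) (P : Finset (List V)) : Prop :=
  (∀ l ∈ P, IsPathList G l ∧ 2 ≤ l.length ∧ ∀ x ∈ l, x ∈ s) ∧
  P.card = s.card ∧
  (∀ e ∈ G.edgeSet, (∀ x ∈ e, x ∈ s) → ExactlyTwo P (fun l => edgeMemList e l)) ∧
  (∀ v ∈ s, ExactlyTwo P (fun l => IsEndpointOf v l)) ∧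
  (∀ e ∈ G.edgeSet, (∀ x ∈ e, x ∈ s) → ∀ f ∈ G.edgeSet, (∀ x ∈ f, x ∈ s) → e ≠ f →
    ∃ l ∈ P, edgeMemList e l ∧ ¬ edgeMemList f l)

lemma not_edgeMem_of_not_mem {e : Sym2 V} {l : List V} {x : V}
    (hx : x ∉ l) (hxe : x ∈ e) : ¬ edgeMemList e l :=
  fun h => hx (mem_of_edgeMemList h hxe)

lemma not_endpoint_of_not_mem {l : List V} {x : V} (hx : x ∉ l) : ¬ IsEndpointOf x l := by
  rintro (h | h)
  · exact hx (List.mem_of_mem_head? h)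
  · exact hx (mem_of_getLast?' h)

lemma endpoint_pair {x y u : V} (hxy : x ≠ y) :
    IsEndpointOf u [x, y] ↔ u = x ∨ u = y := by
  unfold IsEndpointOf
  simp [List.getLast?, eq_comm]

lemma edge_pair {x y : V} {e : Sym2 V} :
    edgeMemList e [x, y] ↔ e = Sym2.mk x y := by
  rw [show ([x,y] : List V) = x :: y :: [] from rfl, edgeMemList_cons]
  simp [edgeMemList_singleton]

lemma stepA1 {s : Finset V} {P' : Finset (List V)} {a c : V}
    (hP' : Good G s P') (ha : a ∉ s) (hc : c ∉ s) (hac : a ≠ c) (hadj : G.Adj a c)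
    (hNa : ∀ y ∈ s, ¬ G.Adj a y) (hNc : ∀ y ∈ s, ¬ G.Adj c y) :
    Good G (insert a (insert c s)) (insert [a, c] (insert [c, a] P')) := by
  obtain ⟨hpaths, hcard, hedge, hend, hsep⟩ := hP'
  have freshA : ∀ l ∈ P', a ∉ l := fun l hl hal => ha ((hpaths l hl).2.2 a hal)
  have freshC : ∀ l ∈ P', c ∉ l := fun l hl hcl => hc ((hpaths l hl).2.2 c hcl)
  have hne : ([a, c] : List V) ≠ [c, a] := by
    intro h; exact hac (by injection h)
  have hacP : ([a, c] : List V) ∉ P' := fun h => freshA _ h (by simp)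
  have hcaP : ([c, a] : List V) ∉ P' := fun h => freshA _ h (by simp)
  have memP : ∀ l, l ∈ insert [a, c] (insert [c, a] P') ↔
      l = [a, c] ∨ l = [c, a] ∨ l ∈ P' := by intro l; simp
  -- edges of the two new paths
  have eac : ∀ e : Sym2 V, edgeMemList e [a, c] ↔ e = Sym2.mk a c := fun e => edge_pair
  have eca : ∀ e : Sym2 V, edgeMemList e [c, a] ↔ e = Sym2.mk a c := by
    intro e; rw [edge_pair, Sym2.eq_swap]
  -- vertex classification for edges within the new vertex set
  have eclass : ∀ e ∈ G.edgeSet, (∀ x ∈ e, x ∈ insert a (insert c s)) →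
      e = Sym2.mk a c ∨ (∀ x ∈ e, x ∈ s) := by
    intro e he hxs
    induction e using Sym2.ind with
    | _ u w =>
      rw [SimpleGraph.mem_edgeSet] at he
      have hu := hxs u (by simp)
      have hw := hxs w (by simp)
      simp only [Finset.mem_insert] at hu hw
      rcases hu with rfl | rfl | hu
      · rcases hw with rfl | rfl | hw
        · exact absurd he (G.irrefl)
        · left; rfl
        · exact absurd he (hNa w hw)
      · rcases hw with rfl | rfl | hw
        · left; exact Sym2.eq_swap
        · exact absurd he (G.irrefl)
        · exact absurd he (hNc w hw)
      · rcases hw with rfl | rfl | hw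
        · exact absurd he.symm (hNa u hu)
        · exact absurd he.symm (hNc u hu)
        · right; intro x hx
          rcases Sym2.mem_iff.1 hx with rfl | rfl
          · exact hu
          · exact hw
  refine ⟨?_, ?_, ?_, ?_, ?_⟩
  · intro l hl
    rcases (memP l).1 hl with rfl | rfl | hl
    · refine ⟨⟨by simp, by simp [List.Chain', hadj], by simp [hac]⟩, by simp, ?_⟩
      intro x hx
      simp only [List.mem_cons, List.not_mem_nil, or_false] at hx
      rcases hx with rfl | rfl <;> simp
    · refine ⟨⟨by simp, by simp [List.Chain', hadj.symm], by simp [Ne.symm hac]⟩, by simp, ?_⟩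
      intro x hx
      simp only [List.mem_cons, List.not_mem_nil, or_false] at hx
      rcases hx with rfl | rfl <;> simp
    · obtain ⟨h1, h2, h3⟩ := hpaths l hl
      exact ⟨h1, h2, fun x hx => by simp [h3 x hx]⟩
  · rw [Finset.card_insert_of_notMem (by simp [hne, hcaP, hacP]),
      Finset.card_insert_of_notMem hcaP, hcard,
      Finset.card_insert_of_notMem (by simp [hac, ha]),
      Finset.card_insert_of_notMem hc]
  · intro e he hxs
    rcases eclass e he hxs with rfl | hxs'
    · refine ⟨[a, c], by simp, [c, a], by simp [memP], hne, (eac _).2 rfl, (eca _).2 rfl, ?_⟩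
      intro l hl hel
      rcases (memP l).1 hl with rfl | rfl | hl
      · exact Or.inl rfl
      · exact Or.inr rfl
      · exact absurd hel (not_edgeMem_of_not_mem (freshA l hl) (by simp))
    · obtain ⟨l1, h1, l2, h2, hne12, hp1, hp2, hu⟩ := hedge e he hxs'
      refine ⟨l1, by simp [memP, h1], l2, by simp [memP, h2], hne12, hp1, hp2, ?_⟩
      intro l hl hel
      have hae : a ∉ e := fun hmem => ha (hxs' a hmem)
      rcases (memP l).1 hl with rfl | rfl | hl
      · exact absurd ((eac e).1 hel) (fun h => hae (h ▸ by simp))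
      · exact absurd ((eca e).1 hel) (fun h => hae (h ▸ by simp))
      · exact hu l hl hel
  · intro u hu
    have endac : ∀ u' : V, IsEndpointOf u' [a, c] ↔ u' = a ∨ u' = c := fun _ => endpoint_pair hac
    have endca : ∀ u' : V, IsEndpointOf u' [c, a] ↔ u' = c ∨ u' = a :=
      fun _ => endpoint_pair (Ne.symm hac)
    simp only [Finset.mem_insert] at hu
    rcases hu with hu | hu | hu
    · refine ⟨[a, c], by simp, [c, a], by simp [memP], hne, (endac u).2 (Or.inl hu),
        (endca u).2 (Or.inr hu), ?_⟩
      intro l hl hel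
      rcases (memP l).1 hl with rfl | rfl | hl
      · exact Or.inl rfl
      · exact Or.inr rfl
      · exact absurd hel (not_endpoint_of_not_mem (fun hm => freshA l hl (hu ▸ hm)))
    · refine ⟨[a, c], by simp, [c, a], by simp [memP], hne, (endac u).2 (Or.inr hu),
        (endca u).2 (Or.inl hu), ?_⟩
      intro l hl hel
      rcases (memP l).1 hl with rfl | rfl | hl
      · exact Or.inl rfl
      · exact Or.inr rfl
      · exact absurd hel (not_endpoint_of_not_mem (fun hm => freshC l hl (hu ▸ hm)))
    · obtain ⟨l1, h1, l2, h2, hne12, hp1, hp2, huq⟩ := hend u hu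
      refine ⟨l1, by simp [memP, h1], l2, by simp [memP, h2], hne12, hp1, hp2, ?_⟩
      intro l hl hel
      rcases (memP l).1 hl with rfl | rfl | hl
      · rcases (endac u).1 hel with h | h
        · exact absurd (h ▸ hu) ha
        · exact absurd (h ▸ hu) hc
      · rcases (endca u).1 hel with h | h
        · exact absurd (h ▸ hu) hc
        · exact absurd (h ▸ hu) ha
      · exact huq l hl hel
  · intro e he hxs f hf hys hef
    rcases eclass e he hxs with rfl | hxs'
    · refine ⟨[a, c], by simp, (eac _).2 rfl, ?_⟩
      rw [eac]
      exact fun h => hef (h.symm)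
    · rcases eclass f hf hys with rfl | hys'
      · obtain ⟨l1, h1, l2, h2, hne12, hp1, hp2, _⟩ := hedge e he hxs'
        refine ⟨l1, by simp [memP, h1], hp1, ?_⟩
        exact not_edgeMem_of_not_mem (freshA l1 h1) (by simp)
      · obtain ⟨l, hl, hel, hfl⟩ := hsep e he hxs' f hf hys' hef
        exact ⟨l, by simp [memP, hl], hel, hfl⟩

lemma a_notin_edge {a : V} {e : Sym2 V} {s : Finset V} (ha : a ∉ s) (hxs : ∀ x ∈ e, x ∈ s) :
    a ∉ e := fun hm => ha (hxs a hm)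

lemma stepA2 {s : Finset V} {P' : Finset (List V)} {a c : V}
    (hP' : Good G s P') (ha : a ∉ s) (hc : c ∈ s) (hadj : G.Adj a c)
    (hN : ∀ y ∈ s, G.Adj a y → y = c) :
    ∃ P, Good G (insert a s) P := by
  obtain ⟨hpaths, hcard, hedge, hend, hsep⟩ := hP'
  have fresh : ∀ l ∈ P', a ∉ l := fun l hl hal => ha ((hpaths l hl).2.2 a hal)
  obtain ⟨Q, hQP, l2c, hl2cP, hQl2c, hQc, hl2c, hcuniq⟩ := hend c hc
  obtain ⟨hQpath, hQlen, hQverts⟩ := hpaths Q hQP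
  obtain ⟨w, hwc, hwQ, hwlast, hQendiff⟩ := exists_other_endpoint hQpath hQlen hQc
  set Q' := extPath a c Q with hQ'def
  have haQ : a ∉ Q := fun h => ha (hQverts a h)
  have hQ'path : IsPathList G Q' := isPathList_extPath hQpath hQlen hQc haQ hadj
  have hQ'len : Q'.length = Q.length + 1 := length_extPath
  have hQ'edge : ∀ e : Sym2 V, edgeMemList e Q' ↔ e = Sym2.mk a c ∨ edgeMemList e Q :=
    fun e => edgeMemList_extPath hQc hQlen
  have hQ'end : ∀ u : V, IsEndpointOf u Q' ↔ u = a ∨ u = w :=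
    fun u => isEndpointOf_extPath hQc hQlen hwlast
  have hQ'mem : ∀ x : V, x ∈ Q' ↔ x = a ∨ x ∈ Q := fun x => mem_extPath
  have hac : a ≠ c := fun h => ha (h ▸ hc)
  have hQ'ac : Q' ≠ [a, c] := by
    intro h
    have := hQ'len
    rw [h] at this
    simp at this
    omega
  have hQ'P' : ∀ l ∈ P', Q' ≠ l := fun l hl h => fresh l hl (h ▸ (hQ'mem a).2 (Or.inl rfl))
  have hacP' : ([a, c] : List V) ∉ P' := fun h => fresh _ h (by simp)
  set P := insert Q' (insert [a, c] (P'.erase Q)) with hPdef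
  have memP : ∀ l, l ∈ P ↔ l = Q' ∨ l = [a, c] ∨ (l ∈ P' ∧ l ≠ Q) := by
    intro l
    simp only [hPdef, Finset.mem_insert, Finset.mem_erase]
    tauto
  have eclass : ∀ e ∈ G.edgeSet, (∀ x ∈ e, x ∈ insert a s) →
      e = Sym2.mk a c ∨ (∀ x ∈ e, x ∈ s) := by
    intro e he hxs
    induction e using Sym2.ind with
    | _ u v =>
      rw [SimpleGraph.mem_edgeSet] at he
      have hu := hxs u (by simp)
      have hv := hxs v (by simp)
      simp only [Finset.mem_insert] at hu hv
      rcases hu with rfl | hu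
      · rcases hv with rfl | hv
        · exact absurd he (G.irrefl)
        · left; rw [hN v hv he]
      · rcases hv with rfl | hv
        · left; rw [hN u hu he.symm]; exact Sym2.eq_swap
        · right; intro x hx
          rcases Sym2.mem_iff.1 hx with rfl | rfl
          · exact hu
          · exact hv
  have aace : a ∈ Sym2.mk a c := by simp
  refine ⟨P, ?_, ?_, ?_, ?_, ?_⟩
  · intro l hl
    rcases (memP l).1 hl with rfl | rfl | ⟨hl, _⟩
    · refine ⟨hQ'path, by omega, ?_⟩
      intro x hx
      rcases (hQ'mem x).1 hx with rfl | hx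
      · simp
      · simp [hQverts x hx]
    · refine ⟨⟨by simp, by simp [List.Chain', hadj], by simp [hac]⟩, by simp, ?_⟩
      intro x hx
      simp only [List.mem_cons, List.not_mem_nil, or_false] at hx
      rcases hx with rfl | rfl <;> simp [hc]
    · obtain ⟨h1, h2, h3⟩ := hpaths l hl
      exact ⟨h1, h2, fun x hx => by simp [h3 x hx]⟩
  · have h1 : Q' ∉ insert [a, c] (P'.erase Q) := by
      simp only [Finset.mem_insert, Finset.mem_erase]
      rintro (h | ⟨_, h⟩)
      · exact hQ'ac h
      · exact hQ'P' _ h rfl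
    have h2 : ([a, c] : List V) ∉ P'.erase Q := fun h => hacP' (Finset.mem_of_mem_erase h)
    rw [hPdef, Finset.card_insert_of_notMem h1, Finset.card_insert_of_notMem h2,
      Finset.card_erase_of_mem hQP, hcard, Finset.card_insert_of_notMem ha]
    have : 1 ≤ s.card := Finset.card_pos.2 ⟨c, hc⟩
    omega
  · intro e he hxs
    rcases eclass e he hxs with rfl | hxs'
    · refine ⟨Q', by simp [memP], [a, c], by simp [memP], hQ'ac,
        (hQ'edge _).2 (Or.inl rfl), edge_pair.2 rfl, ?_⟩
      intro l hl hel
      rcases (memP l).1 hl with rfl | rfl | ⟨hl, _⟩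
      · exact Or.inl rfl
      · exact Or.inr rfl
      · exact absurd hel (not_edgeMem_of_not_mem (fresh l hl) aace)
    · have hae : a ∉ e := a_notin_edge ha hxs'
      have heac : e ≠ Sym2.mk a c := fun h => hae (h ▸ aace)
      obtain ⟨l1, h1, l2, h2, hne12, hp1, hp2, hu⟩ := hedge e he hxs'
      have himg : ∀ {m}, m ∈ P' → (if m = Q then Q' else m) ∈ P := by
        intro m hm
        split
        · exact (memP _).2 (Or.inl rfl)
        · exact (memP _).2 (Or.inr (Or.inr ⟨hm, by assumption⟩))
      have hedgeimg : ∀ {m}, m ∈ P' → edgeMemList e m →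
          edgeMemList e (if m = Q then Q' else m) := by
        intro m hm hem
        split
        · next hmq => exact (hQ'edge _).2 (Or.inr (hmq ▸ hem))
        · exact hem
      refine ⟨if l1 = Q then Q' else l1, himg h1, if l2 = Q then Q' else l2, himg h2,
        ?_, hedgeimg h1 hp1, hedgeimg h2 hp2, ?_⟩
      · split <;> split
        · next hq1 hq2 => exact absurd (hq1.trans hq2.symm) hne12
        · next hq1 hq2 => exact fun h => fresh l2 h2 (h ▸ (hQ'mem a).2 (Or.inl rfl))
        · next hq1 hq2 => exact fun h => fresh l1 h1 (h.symm ▸ (hQ'mem a).2 (Or.inl rfl))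
        · exact hne12
      · intro l hl hel
        rcases (memP l).1 hl with rfl | rfl | ⟨hl, hlQ⟩
        · rcases (hQ'edge e).1 hel with h | h
          · exact absurd h heac
          · rcases hu Q hQP h with h' | h'
            · left; rw [← h']; simp
            · right; rw [← h']; simp
        · exact absurd (edge_pair.1 hel) heac
        · rcases hu l hl hel with h' | h'
          · left; rw [h']; simp [h' ▸ hlQ]
          · right; rw [h']; simp [h' ▸ hlQ]
  · intro u hu
    simp only [Finset.mem_insert] at hu
    rcases hu with hu | hu
    · refine ⟨Q', by simp [memP], [a, c], by simp [memP], hQ'ac,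
        (hQ'end _).2 (Or.inl hu), (endpoint_pair hac).2 (Or.inl hu), ?_⟩
      intro l hl hel
      rcases (memP l).1 hl with rfl | rfl | ⟨hl, _⟩
      · exact Or.inl rfl
      · exact Or.inr rfl
      · exact absurd hel (not_endpoint_of_not_mem (fun hm => fresh l hl (hu ▸ hm)))
    · by_cases huc : u = c
      · refine ⟨l2c, (memP _).2 (Or.inr (Or.inr ⟨hl2cP, Ne.symm hQl2c⟩)), [a, c],
          by simp [memP], fun h => fresh _ hl2cP (h ▸ (by simp : a ∈ [a, c])), huc ▸ hl2c,
          (endpoint_pair hac).2 (Or.inr huc), ?_⟩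
        intro l hl hel
        rcases (memP l).1 hl with rfl | rfl | ⟨hl, hlQ⟩
        · rcases (hQ'end u).1 hel with h | h
          · exact absurd (h ▸ hu) ha
          · exact absurd (h.symm.trans huc) hwc
        · exact Or.inr rfl
        · rcases hcuniq l hl (huc ▸ hel) with h' | h'
          · exact absurd h' hlQ
          · exact Or.inl h'
      · obtain ⟨m1, hm1, m2, hm2, hnem, he1, he2, hmu⟩ := hend u hu
        have himg : ∀ {m}, m ∈ P' → (if m = Q then Q' else m) ∈ P := by
          intro m hm
          split
          · exact (memP _).2 (Or.inl rfl)
          · exact (memP _).2 (Or.inr (Or.inr ⟨hm, by assumption⟩))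
        have hendimg : ∀ {m}, m ∈ P' → IsEndpointOf u m →
            IsEndpointOf u (if m = Q then Q' else m) := by
          intro m hm hem
          split
          · next hmq =>
            subst hmq
            rcases (hQendiff u).1 hem with h | h
            · exact absurd h huc
            · exact (hQ'end u).2 (Or.inr h)
          · exact hem
        refine ⟨if m1 = Q then Q' else m1, himg hm1, if m2 = Q then Q' else m2, himg hm2,
          ?_, hendimg hm1 he1, hendimg hm2 he2, ?_⟩
        · split <;> split
          · next hq1 hq2 => exact absurd (hq1.trans hq2.symm) hnem
          · next hq1 hq2 => exact fun h => fresh m2 hm2 (h ▸ (hQ'mem a).2 (Or.inl rfl))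
          · next hq1 hq2 => exact fun h => fresh m1 hm1 (h.symm ▸ (hQ'mem a).2 (Or.inl rfl))
          · exact hnem
        · intro l hl hel
          rcases (memP l).1 hl with rfl | rfl | ⟨hl, hlQ⟩
          · rcases (hQ'end u).1 hel with h | h
            · exact absurd (h ▸ hu) ha
            · have : IsEndpointOf u Q := (hQendiff u).2 (Or.inr h)
              rcases hmu Q hQP this with h' | h'
              · left; rw [← h']; simp
              · right; rw [← h']; simp
          · rcases (endpoint_pair hac).1 hel with h | h
            · exact absurd (h ▸ hu) ha
            · exact absurd h huc
          · rcases hmu l hl hel with h' | h'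
            · left; rw [h']; simp [h' ▸ hlQ]
            · right; rw [h']; simp [h' ▸ hlQ]
  · intro e he hxs f hf hys hef
    rcases eclass e he hxs with rfl | hxs'
    · refine ⟨[a, c], by simp [memP], edge_pair.2 rfl, ?_⟩
      rw [edge_pair]
      rcases eclass f hf hys with h | h
      · exact fun _ => hef h.symm
      · exact fun hh => (a_notin_edge ha h) (hh ▸ aace)
    · rcases eclass f hf hys with rfl | hys'
      · -- f = s(a,c), e old: find a path of e avoiding Q
        obtain ⟨l1, h1, l2, h2, hne12, hp1, hp2, _⟩ := hedge e he hxs'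
        by_cases hq1 : l1 = Q
        · refine ⟨l2, (memP _).2 (Or.inr (Or.inr ⟨h2, hq1 ▸ Ne.symm hne12⟩)), hp2,
            not_edgeMem_of_not_mem (fresh l2 h2) aace⟩
        · exact ⟨l1, (memP _).2 (Or.inr (Or.inr ⟨h1, hq1⟩)), hp1,
            not_edgeMem_of_not_mem (fresh l1 h1) aace⟩
      · obtain ⟨l, hl, hel, hfl⟩ := hsep e he hxs' f hf hys' hef
        by_cases hq : l = Q
        · subst hq
          refine ⟨Q', (memP _).2 (Or.inl rfl), (hQ'edge e).2 (Or.inr hel), ?_⟩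
          rw [hQ'edge]
          rintro (h | h)
          · exact (a_notin_edge ha hys') (h ▸ aace)
          · exact hfl h
        · exact ⟨l, (memP _).2 (Or.inr (Or.inr ⟨hl, hq⟩)), hel, hfl⟩

lemma endpoint_triple {x y z u : V} (hxz : x ≠ z) :
    IsEndpointOf u [x, y, z] ↔ u = x ∨ u = z := by
  have h1 : ([x, y, z] : List V).head? = some x := rfl
  have h2 : ([x, y, z] : List V).getLast? = some z := by
    rw [show ([x, y, z] : List V) = [x, y] ++ [z] from rfl, List.getLast?_concat]
  unfold IsEndpointOf
  rw [h1, h2]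
  simp [eq_comm]

lemma edge_triple {x y z : V} {e : Sym2 V} :
    edgeMemList e [x, y, z] ↔ e = Sym2.mk x y ∨ e = Sym2.mk y z := by
  rw [show ([x, y, z] : List V) = x :: y :: [z] from rfl, edgeMemList_cons, edge_pair]

lemma stepB {s : Finset V} {P' : Finset (List V)} {v a b : V}
    (hP' : Good G s P') (hv : v ∉ s) (hA : a ∈ s) (hB : b ∈ s) (hab : a ≠ b)
    (hva : G.Adj v a) (hvb : G.Adj v b)
    (hN : ∀ y ∈ s, G.Adj v y → y = a ∨ y = b) :
    ∃ P, Good G (insert v s) P := by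
  obtain ⟨hpaths, hcard, hedge, hend, hsep⟩ := hP'
  have fresh : ∀ l ∈ P', v ∉ l := fun l hl hvl => hv ((hpaths l hl).2.2 v hvl)
  have hvA : v ≠ a := fun h => hv (h ▸ hA)
  have hvB : v ≠ b := fun h => hv (h ▸ hB)
  -- choose the two paths to extend
  obtain ⟨la1, ha1, la2, ha2, hnea, hea1, hea2, hauniq⟩ := hend a hA
  obtain ⟨lb1, hb1, lb2, hb2, hneb, heb1, heb2, hbuniq⟩ := hend b hB
  set Qa := la1 with hQadef
  obtain ⟨Qb, hQbP, hQbend, hQbQa, mb, hmbP, hmbend, hmbQb, hQbmb⟩ :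
      ∃ Qb, Qb ∈ P' ∧ IsEndpointOf b Qb ∧ Qb ≠ Qa ∧
        ∃ mb, mb ∈ P' ∧ IsEndpointOf b mb ∧ mb ≠ Qb ∧
          ∀ l ∈ P', IsEndpointOf b l → l = Qb ∨ l = mb := by
    by_cases h : lb1 = Qa
    · refine ⟨lb2, hb2, heb2, fun hh => hneb (h.trans hh.symm), lb1, hb1, heb1,
        hneb, ?_⟩
      intro l hl hel
      rcases hbuniq l hl hel with h' | h' <;> [right; left] <;> exact h'
    · exact ⟨lb1, hb1, heb1, h, lb2, hb2, heb2, Ne.symm hneb, hbuniq⟩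
  obtain ⟨hQapath, hQalen, hQaverts⟩ := hpaths Qa ha1
  obtain ⟨hQbpath, hQblen, hQbverts⟩ := hpaths Qb hQbP
  obtain ⟨wa, hwaa, hwaQa, hwalast, hQaendiff⟩ := exists_other_endpoint hQapath hQalen hea1
  obtain ⟨wb, hwbb, hwbQb, hwblast, hQbendiff⟩ := exists_other_endpoint hQbpath hQblen hQbend
  have hvQa : v ∉ Qa := fresh Qa ha1
  have hvQb : v ∉ Qb := fresh Qb hQbP
  set Qa' := extPath v a Qa with hQa'def
  set Qb' := extPath v b Qb with hQb'def
  set N : List V := [a, v, b] with hNdef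
  have hQa'path : IsPathList G Qa' := isPathList_extPath hQapath hQalen hea1 hvQa hva
  have hQb'path : IsPathList G Qb' := isPathList_extPath hQbpath hQblen hQbend hvQb hvb
  have hQa'edge : ∀ e : Sym2 V, edgeMemList e Qa' ↔ e = Sym2.mk v a ∨ edgeMemList e Qa :=
    fun e => edgeMemList_extPath hea1 hQalen
  have hQb'edge : ∀ e : Sym2 V, edgeMemList e Qb' ↔ e = Sym2.mk v b ∨ edgeMemList e Qb :=
    fun e => edgeMemList_extPath hQbend hQblen
  have hQa'end : ∀ u : V, IsEndpointOf u Qa' ↔ u = v ∨ u = wa :=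
    fun u => isEndpointOf_extPath hea1 hQalen hwalast
  have hQb'end : ∀ u : V, IsEndpointOf u Qb' ↔ u = v ∨ u = wb :=
    fun u => isEndpointOf_extPath hQbend hQblen hwblast
  have hQa'mem : ∀ x : V, x ∈ Qa' ↔ x = v ∨ x ∈ Qa := fun x => mem_extPath
  have hQb'mem : ∀ x : V, x ∈ Qb' ↔ x = v ∨ x ∈ Qb := fun x => mem_extPath
  have hNend : ∀ u : V, IsEndpointOf u N ↔ u = a ∨ u = b := fun u => endpoint_triple hab
  have hNedge : ∀ e : Sym2 V, edgeMemList e N ↔ e = Sym2.mk a v ∨ e = Sym2.mk v b :=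
    fun e => edge_triple
  have hvav : v ∈ Sym2.mk v a := by simp
  have hvbv : v ∈ Sym2.mk v b := by simp
  have hvaNvb : Sym2.mk v a ≠ Sym2.mk v b := by
    intro h
    rcases Sym2.eq_iff.1 h with ⟨_, h2⟩ | ⟨h2, _⟩
    · exact hab h2
    · exact hvB h2
  have hav_va : Sym2.mk a v = Sym2.mk v a := Sym2.eq_swap
  -- distinctness of the three new paths
  have hQa'Qb' : Qa' ≠ Qb' := by
    intro h
    rw [hQa'def, hQb'def, extPath, extPath] at h
    have h2 : orient a Qa = orient b Qb := by injection h
    have h3 := head?_orient hea1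
    rw [h2, head?_orient hQbend] at h3
    injection h3 with h4
    exact hab h4.symm
  have hNQa' : N ≠ Qa' := by
    intro h
    rw [hNdef, hQa'def, extPath] at h
    injection h with h1 _
    exact hvA h1.symm
  have hNQb' : N ≠ Qb' := by
    intro h
    rw [hNdef, hQb'def, extPath] at h
    injection h with h1 _
    exact hvA h1.symm
  have hvN : v ∈ N := by simp [hNdef]
  have hvQa' : v ∈ Qa' := (hQa'mem v).2 (Or.inl rfl)
  have hvQb' : v ∈ Qb' := (hQb'mem v).2 (Or.inl rfl)
  set P := insert N (insert Qa' (insert Qb' ((P'.erase Qa).erase Qb))) with hPdef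
  have memP : ∀ l, l ∈ P ↔ l = N ∨ l = Qa' ∨ l = Qb' ∨ (l ∈ P' ∧ l ≠ Qa ∧ l ≠ Qb) := by
    intro l
    simp only [hPdef, Finset.mem_insert, Finset.mem_erase]
    tauto
  -- the reassignment map
  set φ : List V → List V := fun m => if m = Qa then Qa' else if m = Qb then Qb' else m
    with hφdef
  have himg : ∀ m ∈ P', φ m ∈ P := by
    intro m hm
    rw [hφdef]
    dsimp only
    split
    · exact (memP _).2 (Or.inr (Or.inl rfl))
    · split
      · exact (memP _).2 (Or.inr (Or.inr (Or.inl rfl)))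
      · exact (memP _).2 (Or.inr (Or.inr (Or.inr ⟨hm, by assumption, by assumption⟩)))
  have hφQa : φ Qa = Qa' := by simp [hφdef]
  have hφQb : φ Qb = Qb' := by simp [hφdef, hQbQa]
  have hφid : ∀ {m}, m ≠ Qa → m ≠ Qb → φ m = m := by
    intro m h1 h2; simp [hφdef, h1, h2]
  have hφv : ∀ m ∈ P', v ∈ φ m → (m = Qa ∨ m = Qb) := by
    intro m hm hvm
    by_cases h1 : m = Qa
    · exact Or.inl h1
    · by_cases h2 : m = Qb
      · exact Or.inr h2
      · rw [hφid h1 h2] at hvm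
        exact absurd hvm (fresh m hm)
  have hφinj : ∀ m1 ∈ P', ∀ m2 ∈ P', m1 ≠ m2 → φ m1 ≠ φ m2 := by
    intro m1 hm1 m2 hm2 hne h
    by_cases h1 : m1 = Qa
    · rw [h1, hφQa] at h
      by_cases h2 : m2 = Qa
      · exact hne (h1.trans h2.symm)
      · by_cases h3 : m2 = Qb
        · rw [h3, hφQb] at h
          exact hQa'Qb' h
        · rw [hφid h2 h3] at h
          exact fresh m2 hm2 (h ▸ hvQa')
    · by_cases h2 : m1 = Qb
      · rw [h2, hφQb] at h
        by_cases h3 : m2 = Qa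
        · rw [h3, hφQa] at h
          exact hQa'Qb' h.symm
        · by_cases h4 : m2 = Qb
          · exact hne (h2.trans h4.symm)
          · rw [hφid h3 h4] at h
            exact fresh m2 hm2 (h ▸ hvQb')
      · rw [hφid h1 h2] at h
        by_cases h3 : m2 = Qa
        · rw [h3, hφQa] at h
          exact fresh m1 hm1 (h.symm ▸ hvQa')
        · by_cases h4 : m2 = Qb
          · rw [h4, hφQb] at h
            exact fresh m1 hm1 (h.symm ▸ hvQb')
          · rw [hφid h3 h4] at h
            exact hne h
  -- preservation of old edges along φ
  have hφedge : ∀ m ∈ P', ∀ {e : Sym2 V}, v ∉ e → (edgeMemList e (φ m) ↔ edgeMemList e m) := by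
    intro m hm e hve
    by_cases h1 : m = Qa
    · subst h1
      rw [hφQa, hQa'edge]
      constructor
      · rintro (rfl | h)
        · exact absurd hvav hve
        · exact h
      · exact Or.inr
    · by_cases h2 : m = Qb
      · subst h2
        rw [hφQb, hQb'edge]
        constructor
        · rintro (rfl | h)
          · exact absurd hvbv hve
          · exact h
        · exact Or.inr
      · rw [hφid h1 h2]
  refine ⟨P, ?_, ?_, ?_, ?_, ?_⟩
  -- paths
  · intro l hl
    rcases (memP l).1 hl with rfl | rfl | rfl | ⟨hl, _, _⟩
    · refine ⟨⟨by simp [hNdef], ?_, ?_⟩, by simp [hNdef], ?_⟩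
      · rw [hNdef]
        exact List.isChain_cons_cons.2 ⟨hva.symm, List.isChain_cons_cons.2 ⟨hvb, List.isChain_singleton _⟩⟩
      · simp [hNdef, hvA.symm, hvB, hab]
      · intro x hx
        rw [hNdef] at hx
        simp only [List.mem_cons, List.not_mem_nil, or_false] at hx
        rcases hx with rfl | rfl | rfl <;> simp [hA, hB]
    · refine ⟨hQa'path, ?_, ?_⟩
      · rw [hQa'def, length_extPath]; omega
      · intro x hx
        rcases (hQa'mem x).1 hx with rfl | hx <;> simp [hQaverts _ ‹_›]
    · refine ⟨hQb'path, ?_, ?_⟩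
      · rw [hQb'def, length_extPath]; omega
      · intro x hx
        rcases (hQb'mem x).1 hx with rfl | hx <;> simp [hQbverts _ ‹_›]
    · obtain ⟨h1, h2, h3⟩ := hpaths l hl
      exact ⟨h1, h2, fun x hx => by simp [h3 x hx]⟩
  -- cardinality
  · have e1 : Qb ∈ P'.erase Qa := Finset.mem_erase.2 ⟨hQbQa, hQbP⟩
    have c1 : Qb' ∉ (P'.erase Qa).erase Qb := by
      intro h
      exact fresh _ (Finset.mem_of_mem_erase (Finset.mem_of_mem_erase h)) hvQb'
    have c2 : Qa' ∉ insert Qb' ((P'.erase Qa).erase Qb) := by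
      simp only [Finset.mem_insert]
      rintro (h | h)
      · exact hQa'Qb' h
      · exact fresh _ (Finset.mem_of_mem_erase (Finset.mem_of_mem_erase h)) hvQa'
    have c3 : N ∉ insert Qa' (insert Qb' ((P'.erase Qa).erase Qb)) := by
      simp only [Finset.mem_insert]
      rintro (h | h | h)
      · exact hNQa' h
      · exact hNQb' h
      · exact fresh _ (Finset.mem_of_mem_erase (Finset.mem_of_mem_erase h)) hvN
    have hs2 : 2 ≤ s.card := by
      have : ({a, b} : Finset V) ⊆ s := by
        intro x hx; simp only [Finset.mem_insert, Finset.mem_singleton] at hx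
        rcases hx with rfl | rfl <;> assumption
      calc 2 = ({a, b} : Finset V).card := (Finset.card_pair hab).symm
        _ ≤ s.card := Finset.card_le_card this
    rw [hPdef, Finset.card_insert_of_notMem c3, Finset.card_insert_of_notMem c2,
      Finset.card_insert_of_notMem c1, Finset.card_erase_of_mem e1,
      Finset.card_erase_of_mem ha1, hcard, Finset.card_insert_of_notMem hv]
    omega
  -- edge exactness
  · intro e he hxs
    have eclass : (∀ x ∈ e, x ∈ s) ∨ e = Sym2.mk v a ∨ e = Sym2.mk v b := by
      induction e using Sym2.ind with
      | _ x y =>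
        rw [SimpleGraph.mem_edgeSet] at he
        have hx := hxs x (by simp)
        have hy := hxs y (by simp)
        simp only [Finset.mem_insert] at hx hy
        rcases hx with rfl | hx
        · rcases hy with rfl | hy
          · exact absurd he (G.irrefl)
          · rcases hN y hy he with rfl | rfl
            · exact Or.inr (Or.inl rfl)
            · exact Or.inr (Or.inr rfl)
        · rcases hy with rfl | hy
          · rcases hN x hx he.symm with rfl | rfl
            · exact Or.inr (Or.inl Sym2.eq_swap)
            · exact Or.inr (Or.inr Sym2.eq_swap)
          · left; intro z hz
            rcases Sym2.mem_iff.1 hz with rfl | rfl <;> assumption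
    rcases eclass with hxs' | rfl | rfl
    · have hve : v ∉ e := fun h => hv (hxs' v h)
      obtain ⟨e1, he1, e2, he2, hne12, hp1, hp2, hu⟩ := hedge e he hxs'
      refine ⟨φ e1, himg e1 he1, φ e2, himg e2 he2, hφinj e1 he1 e2 he2 hne12,
        (hφedge e1 he1 hve).2 hp1, (hφedge e2 he2 hve).2 hp2, ?_⟩
      intro l hl hel
      rcases (memP l).1 hl with rfl | rfl | rfl | ⟨hl, hlQa, hlQb⟩
      · rcases (hNedge e).1 hel with rfl | rfl
        · exact absurd (by simp : v ∈ Sym2.mk a v) hve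
        · exact absurd hvbv hve
      · have : edgeMemList e Qa := by
          rcases (hQa'edge e).1 hel with rfl | h
          · exact absurd hvav hve
          · exact h
        rcases hu Qa ha1 this with h' | h'
        · left; rw [← h', hφQa]
        · right; rw [← h', hφQa]
      · have : edgeMemList e Qb := by
          rcases (hQb'edge e).1 hel with rfl | h
          · exact absurd hvbv hve
          · exact h
        rcases hu Qb hQbP this with h' | h'
        · left; rw [← h', hφQb]
        · right; rw [← h', hφQb]
      · rcases hu l hl hel with h' | h'
        · left; rw [h', hφid (h' ▸ hlQa) (h' ▸ hlQb)]
        · right; rw [h', hφid (h' ▸ hlQa) (h' ▸ hlQb)]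
    · -- e = s(v,a)
      refine ⟨Qa', (memP _).2 (Or.inr (Or.inl rfl)), N, (memP _).2 (Or.inl rfl),
        Ne.symm hNQa', (hQa'edge _).2 (Or.inl rfl), (hNedge _).2 (Or.inl hav_va.symm), ?_⟩
      intro l hl hel
      rcases (memP l).1 hl with rfl | rfl | rfl | ⟨hl, hlQa, hlQb⟩
      · exact Or.inr rfl
      · exact Or.inl rfl
      · rcases (hQb'edge _).1 hel with h | h
        · exact absurd h hvaNvb
        · exact absurd (mem_of_edgeMemList h hvav) hvQb
      · exact absurd hel (not_edgeMem_of_not_mem (fresh l hl) hvav)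
    · -- e = s(v,b)
      refine ⟨Qb', (memP _).2 (Or.inr (Or.inr (Or.inl rfl))), N, (memP _).2 (Or.inl rfl),
        Ne.symm hNQb', (hQb'edge _).2 (Or.inl rfl), (hNedge _).2 (Or.inr rfl), ?_⟩
      intro l hl hel
      rcases (memP l).1 hl with rfl | rfl | rfl | ⟨hl, hlQa, hlQb⟩
      · exact Or.inr rfl
      · rcases (hQa'edge _).1 hel with h | h
        · exact absurd h.symm hvaNvb
        · exact absurd (mem_of_edgeMemList h hvbv) hvQa
      · exact Or.inl rfl
      · exact absurd hel (not_edgeMem_of_not_mem (fresh l hl) hvbv)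
  -- endpoint exactness
  · intro u hu
    simp only [Finset.mem_insert] at hu
    rcases hu with hu | hu
    · -- u = v
      refine ⟨Qa', (memP _).2 (Or.inr (Or.inl rfl)), Qb',
        (memP _).2 (Or.inr (Or.inr (Or.inl rfl))), hQa'Qb',
        (hQa'end u).2 (Or.inl hu), (hQb'end u).2 (Or.inl hu), ?_⟩
      intro l hl hel
      rcases (memP l).1 hl with rfl | rfl | rfl | ⟨hl, _, _⟩
      · rcases (hNend u).1 hel with h | h
        · exact absurd (hu ▸ h : v = a) hvA
        · exact absurd (hu ▸ h : v = b) hvB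
      · exact Or.inl rfl
      · exact Or.inr rfl
      · exact absurd hel (not_endpoint_of_not_mem (fun hm => fresh l hl (hu ▸ hm)))
    · by_cases hua : u = a
      · -- u = a : pair (N, φ la2)
        subst hua
        have hφla2end : IsEndpointOf u (φ la2) := by
          by_cases h2 : la2 = Qb
          · rw [h2, hφQb]
            have : u = wb := by
              rcases (hQbendiff u).1 (h2 ▸ hea2) with h | h
              · exact absurd h hab
              · exact h
            exact (hQb'end u).2 (Or.inr this)
          · rw [hφid (Ne.symm hnea) h2]
            exact hea2
        have hφla2mem : φ la2 ∈ P := himg la2 ha2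
        have hNφla2 : N ≠ φ la2 := by
          by_cases h2 : la2 = Qb
          · rw [h2, hφQb]; exact hNQb'
          · rw [hφid (Ne.symm hnea) h2]
            exact fun h => fresh la2 ha2 (h ▸ hvN)
        refine ⟨N, (memP _).2 (Or.inl rfl), φ la2, hφla2mem, hNφla2,
          (hNend u).2 (Or.inl rfl), hφla2end, ?_⟩
        intro l hl hel
        rcases (memP l).1 hl with rfl | rfl | rfl | ⟨hl, hlQa, hlQb⟩
        · exact Or.inl rfl
        · rcases (hQa'end u).1 hel with h | h
          · exact absurd h.symm hvA
          · exact absurd h.symm hwaa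
        · rcases (hQb'end u).1 hel with h | h
          · exact absurd h.symm hvA
          · -- u = wb, so Qb has endpoint a=u, hence Qb = la2
            have hQbu : IsEndpointOf u Qb := (hQbendiff u).2 (Or.inr h)
            rcases hauniq Qb hQbP hQbu with h' | h'
            · exact absurd h' hQbQa
            · right; rw [← h', hφQb]
        · rcases hauniq l hl hel with h' | h'
          · exact absurd h' hlQa
          · right; rw [h', hφid (h' ▸ hlQa) (h' ▸ hlQb)]
      · by_cases hub : u = b
        · -- u = b : pair (N, φ mb)
          subst hub
          have hφmbend : IsEndpointOf u (φ mb) := by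
            by_cases h2 : mb = Qa
            · rw [h2, hφQa]
              have : u = wa := by
                rcases (hQaendiff u).1 (h2 ▸ hmbend) with h | h
                · exact absurd h hua
                · exact h
              exact (hQa'end u).2 (Or.inr this)
            · rw [hφid h2 hmbQb]
              exact hmbend
          have hNφmb : N ≠ φ mb := by
            by_cases h2 : mb = Qa
            · rw [h2, hφQa]; exact hNQa'
            · rw [hφid h2 hmbQb]
              exact fun h => fresh mb hmbP (h ▸ hvN)
          refine ⟨N, (memP _).2 (Or.inl rfl), φ mb, himg mb hmbP, hNφmb,
            (hNend u).2 (Or.inr rfl), hφmbend, ?_⟩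
          intro l hl hel
          rcases (memP l).1 hl with rfl | rfl | rfl | ⟨hl, hlQa, hlQb⟩
          · exact Or.inl rfl
          · rcases (hQa'end u).1 hel with h | h
            · exact absurd h.symm hvB
            · -- u = wa : Qa has endpoint b=u, so Qa = mb
              have hQau : IsEndpointOf u Qa := (hQaendiff u).2 (Or.inr h)
              rcases hQbmb Qa ha1 hQau with h' | h'
              · exact absurd h'.symm hQbQa
              · right; rw [← h', hφQa]
          · rcases (hQb'end u).1 hel with h | h
            · exact absurd h.symm hvB
            · exact absurd h.symm hwbb
          · rcases hQbmb l hl hel with h' | h'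
            · exact absurd h' hlQb
            · right; rw [h', hφid (h' ▸ hlQa) (h' ▸ hlQb)]
        · -- generic u
          obtain ⟨m1, hm1, m2, hm2, hnem, he1, he2, hmu⟩ := hend u hu
          have huv : u ≠ v := fun h => hv (h ▸ hu)
          have hendimg : ∀ {m}, m ∈ P' → IsEndpointOf u m → IsEndpointOf u (φ m) := by
            intro m hm hem
            by_cases h1 : m = Qa
            · rw [h1, hφQa]
              rcases (hQaendiff u).1 (h1 ▸ hem) with h | h
              · exact absurd h hua
              · exact (hQa'end u).2 (Or.inr h)
            · by_cases h2 : m = Qb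
              · rw [h2, hφQb]
                rcases (hQbendiff u).1 (h2 ▸ hem) with h | h
                · exact absurd h hub
                · exact (hQb'end u).2 (Or.inr h)
              · rw [hφid h1 h2]; exact hem
          refine ⟨φ m1, himg m1 hm1, φ m2, himg m2 hm2, hφinj m1 hm1 m2 hm2 hnem,
            hendimg hm1 he1, hendimg hm2 he2, ?_⟩
          intro l hl hel
          rcases (memP l).1 hl with rfl | rfl | rfl | ⟨hl, hlQa, hlQb⟩
          · rcases (hNend u).1 hel with h | h
            · exact absurd h hua
            · exact absurd h hub
          · rcases (hQa'end u).1 hel with h | h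
            · exact absurd h huv
            · have : IsEndpointOf u Qa := (hQaendiff u).2 (Or.inr h)
              rcases hmu Qa ha1 this with h' | h'
              · left; rw [← h', hφQa]
              · right; rw [← h', hφQa]
          · rcases (hQb'end u).1 hel with h | h
            · exact absurd h huv
            · have : IsEndpointOf u Qb := (hQbendiff u).2 (Or.inr h)
              rcases hmu Qb hQbP this with h' | h'
              · left; rw [← h', hφQb]
              · right; rw [← h', hφQb]
          · rcases hmu l hl hel with h' | h'
            · left; rw [h', hφid (h' ▸ hlQa) (h' ▸ hlQb)]
            · right; rw [h', hφid (h' ▸ hlQa) (h' ▸ hlQb)]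
  -- separation
  · intro e he hxs f hf hys hef
    have eclass : ∀ (g : Sym2 V), g ∈ G.edgeSet → (∀ x ∈ g, x ∈ insert v s) →
        (∀ x ∈ g, x ∈ s) ∨ g = Sym2.mk v a ∨ g = Sym2.mk v b := by
      intro g hg hgs
      induction g using Sym2.ind with
      | _ x y =>
        rw [SimpleGraph.mem_edgeSet] at hg
        have hx := hgs x (by simp)
        have hy := hgs y (by simp)
        simp only [Finset.mem_insert] at hx hy
        rcases hx with rfl | hx
        · rcases hy with rfl | hy
          · exact absurd hg (G.irrefl)
          · rcases hN y hy hg with rfl | rfl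
            · exact Or.inr (Or.inl rfl)
            · exact Or.inr (Or.inr rfl)
        · rcases hy with rfl | hy
          · rcases hN x hx hg.symm with rfl | rfl
            · exact Or.inr (Or.inl Sym2.eq_swap)
            · exact Or.inr (Or.inr Sym2.eq_swap)
          · left; intro z hz
            rcases Sym2.mem_iff.1 hz with rfl | rfl <;> assumption
    rcases eclass e he hxs with hxs' | rfl | rfl
    · have hve : v ∉ e := fun h => hv (hxs' v h)
      rcases eclass f hf hys with hys' | rfl | rfl
      · obtain ⟨l, hl, hel, hfl⟩ := hsep e he hxs' f hf hys' hef
        have hvf : v ∉ f := fun h => hv (hys' v h)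
        refine ⟨φ l, himg l hl, (hφedge l hl hve).2 hel, ?_⟩
        exact fun h => hfl ((hφedge l hl hvf).1 h)
      · -- f = s(v,a): take a path of e different from Qa
        obtain ⟨e1, he1, e2, he2, hne12, hp1, hp2, _⟩ := hedge e he hxs'
        by_cases hq : e1 = Qa
        · have he2Qa : e2 ≠ Qa := hq ▸ Ne.symm hne12
          refine ⟨φ e2, himg e2 he2, (hφedge e2 he2 hve).2 hp2, ?_⟩
          intro h
          by_cases h2 : e2 = Qb
          · rw [h2, hφQb] at h
            rcases (hQb'edge _).1 h with h' | h'
            · exact hvaNvb h'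
            · exact fresh Qb hQbP (mem_of_edgeMemList h' hvav)
          · rw [hφid he2Qa h2] at h
            exact fresh e2 he2 (mem_of_edgeMemList h hvav)
        · refine ⟨φ e1, himg e1 he1, (hφedge e1 he1 hve).2 hp1, ?_⟩
          intro h
          by_cases h2 : e1 = Qb
          · rw [h2, hφQb] at h
            rcases (hQb'edge _).1 h with h' | h'
            · exact hvaNvb h'
            · exact fresh Qb hQbP (mem_of_edgeMemList h' hvav)
          · rw [hφid hq h2] at h
            exact fresh e1 he1 (mem_of_edgeMemList h hvav)
      · -- f = s(v,b): take a path of e different from Qb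
        obtain ⟨e1, he1, e2, he2, hne12, hp1, hp2, _⟩ := hedge e he hxs'
        by_cases hq : e1 = Qb
        · have he2Qb : e2 ≠ Qb := hq ▸ Ne.symm hne12
          refine ⟨φ e2, himg e2 he2, (hφedge e2 he2 hve).2 hp2, ?_⟩
          intro h
          by_cases h2 : e2 = Qa
          · rw [h2, hφQa] at h
            rcases (hQa'edge _).1 h with h' | h'
            · exact hvaNvb h'.symm
            · exact fresh Qa ha1 (mem_of_edgeMemList h' hvbv)
          · rw [hφid h2 he2Qb] at h
            exact fresh e2 he2 (mem_of_edgeMemList h hvbv)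
        · refine ⟨φ e1, himg e1 he1, (hφedge e1 he1 hve).2 hp1, ?_⟩
          intro h
          by_cases h2 : e1 = Qa
          · rw [h2, hφQa] at h
            rcases (hQa'edge _).1 h with h' | h'
            · exact hvaNvb h'.symm
            · exact fresh Qa ha1 (mem_of_edgeMemList h' hvbv)
          · rw [hφid h2 hq] at h
            exact fresh e1 he1 (mem_of_edgeMemList h hvbv)
    · -- e = s(v,a)
      rcases eclass f hf hys with hys' | rfl | rfl
      · refine ⟨N, (memP _).2 (Or.inl rfl), (hNedge _).2 (Or.inl hav_va.symm), ?_⟩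
        intro h
        rcases (hNedge f).1 h with rfl | rfl
        · exact hv (hys' v (by simp))
        · exact hv (hys' v (by simp))
      · exact absurd rfl hef
      · refine ⟨Qa', (memP _).2 (Or.inr (Or.inl rfl)), (hQa'edge _).2 (Or.inl rfl), ?_⟩
        intro h
        rcases (hQa'edge _).1 h with h' | h'
        · exact hvaNvb h'.symm
        · exact hvQa (mem_of_edgeMemList h' hvbv)
    · -- e = s(v,b)
      rcases eclass f hf hys with hys' | rfl | rfl
      · refine ⟨N, (memP _).2 (Or.inl rfl), (hNedge _).2 (Or.inr rfl), ?_⟩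
        intro h
        rcases (hNedge f).1 h with rfl | rfl
        · exact hv (hys' v (by simp))
        · exact hv (hys' v (by simp))
      · refine ⟨Qb', (memP _).2 (Or.inr (Or.inr (Or.inl rfl))), (hQb'edge _).2 (Or.inl rfl), ?_⟩
        intro h
        rcases (hQb'edge _).1 h with h' | h'
        · exact hvaNvb h'
        · exact hvQb (mem_of_edgeMemList h' hvav)
      · exact absurd rfl hef

lemma good_empty : Good G (∅ : Finset V) (∅ : Finset (List V)) := by
  refine ⟨by simp, by simp, ?_, by simp, ?_⟩
  · intro e he hxs
    exfalso
    induction e using Sym2.ind with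
    | _ x y => exact absurd (hxs x (by simp)) (Finset.notMem_empty x)
  · intro e he hxs f hf hys hef
    exfalso
    induction e using Sym2.ind with
    | _ x y => exact absurd (hxs x (by simp)) (Finset.notMem_empty x)

lemma good_exists (hG : ∀ S : Set V, S.Nonempty → ∃ v ∈ S, {u | u ∈ S ∧ G.Adj v u}.ncard ≤ 2) :
    ∀ n (s : Finset V), s.card ≤ n → (∀ x ∈ s, ∃ y ∈ s, G.Adj x y) →
      ∃ P, Good G s P := by
  intro n
  induction n with
  | zero =>
    intro s hcard _
    have : s = ∅ := Finset.card_eq_zero.1 (Nat.le_zero.1 hcard)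
    exact this ▸ ⟨∅, good_empty⟩
  | succ n ih =>
    intro s hcard hd
    rcases s.eq_empty_or_nonempty with rfl | hne
    · exact ⟨∅, good_empty⟩
    by_cases hA : ∃ a ∈ s, (s.filter (fun y => G.Adj a y)).card = 1
    · obtain ⟨a, ha, hcard1⟩ := hA
      obtain ⟨c, hc⟩ := Finset.card_eq_one.1 hcard1
      have hcs : c ∈ s ∧ G.Adj a c := by
        have : c ∈ s.filter (fun y => G.Adj a y) := by rw [hc]; simp
        simpa using this
      have huniq : ∀ y ∈ s, G.Adj a y → y = c := by
        intro y hy hadj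
        have : y ∈ s.filter (fun y => G.Adj a y) := by simp [hy, hadj]
        rw [hc] at this; simpa using this
      have hac : a ≠ c := G.ne_of_adj hcs.2
      by_cases hB1 : (s.filter (fun y => G.Adj c y)).card = 1
      · -- isolated edge a-c
        obtain ⟨d, hdc⟩ := Finset.card_eq_one.1 hB1
        have hain : a ∈ s.filter (fun y => G.Adj c y) := by simp [ha, hcs.2.symm]
        have hda : d = a := (Finset.mem_singleton.1 (hdc ▸ hain)).symm
        subst hda
        have huniqc : ∀ y ∈ s, G.Adj c y → y = d := by
          intro y hy hadj
          have : y ∈ s.filter (fun y => G.Adj c y) := by simp [hy, hadj]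
          rw [hdc] at this; simpa using this
        set s' := (s.erase d).erase c with hs'def
        have hcs'' : c ∈ s.erase d := Finset.mem_erase.2 ⟨Ne.symm hac, hcs.1⟩
        have hseq : insert d (insert c s') = s := by
          rw [hs'def, Finset.insert_erase hcs'', Finset.insert_erase ha]
        have hdnotin : d ∉ s' := fun h =>
          (Finset.mem_erase.1 (Finset.mem_of_mem_erase h)).1 rfl
        have hcnotin : c ∉ s' := fun h => (Finset.mem_erase.1 h).1 rfl
        have hNd : ∀ y ∈ s', ¬ G.Adj d y := by
          intro y hy hadj
          have hy1 := Finset.mem_erase.1 hy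
          have hy2 := Finset.mem_erase.1 hy1.2
          exact hy1.1 (huniq y hy2.2 hadj)
        have hNc : ∀ y ∈ s', ¬ G.Adj c y := by
          intro y hy hadj
          have hy1 := Finset.mem_erase.1 hy
          have hy2 := Finset.mem_erase.1 hy1.2
          exact hy2.1 (huniqc y hy2.2 hadj)
        have hcard' : s'.card ≤ n := by
          have h1 : (s.erase d).card < s.card := Finset.card_erase_lt_of_mem ha
          have h2 : s'.card ≤ (s.erase d).card := Finset.card_erase_le
          omega
        have hd' : ∀ x ∈ s', ∃ y ∈ s', G.Adj x y := by
          intro x hx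
          have hx1 := Finset.mem_erase.1 hx
          have hx2 := Finset.mem_erase.1 hx1.2
          obtain ⟨y, hy, hadj⟩ := hd x hx2.2
          have hyd : y ≠ d := by
            rintro rfl
            exact hx1.1 (huniq x hx2.2 hadj.symm)
          have hyc : y ≠ c := by
            rintro rfl
            exact hx2.1 (huniqc x hx2.2 hadj.symm)
          exact ⟨y, Finset.mem_erase.2 ⟨hyc, Finset.mem_erase.2 ⟨hyd, hy⟩⟩, hadj⟩
        obtain ⟨P', hP'⟩ := ih s' hcard' hd'
        refine ⟨_, hseq ▸ stepA1 hP' hdnotin hcnotin hac hcs.2 hNd hNc⟩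
      · -- degree-1 vertex a, its neighbour c has another neighbour
        have hain : a ∈ s.filter (fun y => G.Adj c y) := by simp [ha, hcs.2.symm]
        have hge2 : 2 ≤ (s.filter (fun y => G.Adj c y)).card := by
          have h1 : 1 ≤ (s.filter (fun y => G.Adj c y)).card :=
            Finset.card_pos.2 ⟨a, hain⟩
          omega
        have herase : ((s.filter (fun y => G.Adj c y)).erase a).Nonempty := by
          apply Finset.card_pos.1
          rw [Finset.card_erase_of_mem hain]
          omega
        obtain ⟨d, hd'⟩ := herase
        have hd1 := Finset.mem_erase.1 hd'
        have hd2 := Finset.mem_filter.1 hd1.2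
        set s' := s.erase a with hs'def
        have hseq : insert a s' = s := Finset.insert_erase ha
        have ha' : a ∉ s' := fun h => (Finset.mem_erase.1 h).1 rfl
        have hc' : c ∈ s' := Finset.mem_erase.2 ⟨Ne.symm hac, hcs.1⟩
        have hN' : ∀ y ∈ s', G.Adj a y → y = c :=
          fun y hy hadj => huniq y (Finset.mem_of_mem_erase hy) hadj
        have hcard' : s'.card ≤ n := by
          have h1 : s'.card < s.card := Finset.card_erase_lt_of_mem ha
          omega
        have hd'' : ∀ x ∈ s', ∃ y ∈ s', G.Adj x y := by
          intro x hx
          have hx1 := Finset.mem_erase.1 hx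
          obtain ⟨y, hy, hadj⟩ := hd x hx1.2
          by_cases hya : y = a
          · subst hya
            have hxc : x = c := huniq x hx1.2 hadj.symm
            exact ⟨d, Finset.mem_erase.2 ⟨hd1.1, hd2.1⟩, hxc ▸ hd2.2⟩
          · exact ⟨y, Finset.mem_erase.2 ⟨hya, hy⟩, hadj⟩
        obtain ⟨P', hP'⟩ := ih s' hcard' hd''
        obtain ⟨P, hP⟩ := stepA2 hP' ha' hc' hcs.2 hN'
        exact ⟨P, hseq ▸ hP⟩
    · -- minimum degree two: use 2-degeneracy
      push_neg at hA
      have hdeg : ∀ x ∈ s, 2 ≤ (s.filter (fun y => G.Adj x y)).card := by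
        intro x hx
        have h1 : 1 ≤ (s.filter (fun y => G.Adj x y)).card := by
          obtain ⟨y, hy, hadj⟩ := hd x hx
          exact Finset.card_pos.2 ⟨y, by simp [hy, hadj]⟩
        have := hA x hx
        omega
      obtain ⟨v, hvs, hvdeg⟩ := hG ↑s (Finset.coe_nonempty.2 hne)
      have hvmem : v ∈ s := hvs
      have hseteq : {u | u ∈ (↑s : Set V) ∧ G.Adj v u} =
          ↑(s.filter (fun y => G.Adj v y)) := by
        ext u; simp
      rw [hseteq, Set.ncard_coe_finset] at hvdeg
      have hv2 : (s.filter (fun y => G.Adj v y)).card = 2 :=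
        le_antisymm hvdeg (hdeg v hvmem)
      obtain ⟨a, b, hab, hfab⟩ := Finset.card_eq_two.1 hv2
      have hmemfilter : ∀ y, y ∈ s.filter (fun y => G.Adj v y) ↔ (y ∈ s ∧ G.Adj v y) := by
        intro y; simp
      have haf : a ∈ s ∧ G.Adj v a := (hmemfilter a).1 (by rw [hfab]; simp)
      have hbf : b ∈ s ∧ G.Adj v b := (hmemfilter b).1 (by rw [hfab]; simp)
      have hN : ∀ y ∈ s, G.Adj v y → y = a ∨ y = b := by
        intro y hy hadj
        have : y ∈ s.filter (fun y => G.Adj v y) := by simp [hy, hadj]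
        rw [hfab] at this
        simpa using this
      set s' := s.erase v with hs'def
      have hseq : insert v s' = s := Finset.insert_erase hvmem
      have hv' : v ∉ s' := fun h => (Finset.mem_erase.1 h).1 rfl
      have hA' : a ∈ s' := Finset.mem_erase.2 ⟨(G.ne_of_adj haf.2).symm, haf.1⟩
      have hB' : b ∈ s' := Finset.mem_erase.2 ⟨(G.ne_of_adj hbf.2).symm, hbf.1⟩
      have hN' : ∀ y ∈ s', G.Adj v y → y = a ∨ y = b :=
        fun y hy hadj => hN y (Finset.mem_of_mem_erase hy) hadj
      have hcard' : s'.card ≤ n := by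
        have h1 : s'.card < s.card := Finset.card_erase_lt_of_mem hvmem
        omega
      have hd'' : ∀ x ∈ s', ∃ y ∈ s', G.Adj x y := by
        intro x hx
        have hx1 := Finset.mem_erase.1 hx
        have h2 := hdeg x hx1.2
        obtain ⟨p, hp, q, hq, hpq⟩ :=
          Finset.one_lt_card.1 (show 1 < (s.filter (fun y => G.Adj x y)).card by omega)
        have hpf := Finset.mem_filter.1 hp
        have hqf := Finset.mem_filter.1 hq
        by_cases hpv : p = v
        · refine ⟨q, Finset.mem_erase.2 ⟨fun h => hpq (hpv.trans h.symm), hqf.1⟩, hqf.2⟩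
        · exact ⟨p, Finset.mem_erase.2 ⟨hpv, hpf.1⟩, hpf.2⟩
      obtain ⟨P', hP'⟩ := ih s' hcard' hd''
      obtain ⟨P, hP⟩ := stepB hP' hv' hA' hB' hab haf.2 hbf.2 hN'
      exact ⟨P, hseq ▸ hP⟩

end Aux

/-- every connected 2-degenerate graph on `n ≥ 3` vertices has a
strongly separating path system with exactly `n` paths in which every edge lies
in exactly two paths and every vertex is an endpoint of exactly two paths. -/
theorem exists_nice_ssp_of_twoDegenerate {V : Type*} [Fintype V]
    (G : SimpleGraph V) (hG : TwoDegenerate G) (hconn : G.Connected)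
    (hn : 3 ≤ Fintype.card V) :
    ∃ P : Finset (List V), StronglySeparating G P ∧ P.card = Fintype.card V ∧
      (∀ e ∈ G.edgeSet, (P.filter fun l => edgeMemList e l).card = 2) ∧
      (∀ v : V, (P.filter fun l => IsEndpointOf v l).card = 2) := by
  classical
  have hd : ∀ x ∈ (Finset.univ : Finset V), ∃ y ∈ (Finset.univ : Finset V), G.Adj x y := by
    intro x _
    have h1 : 1 < Fintype.card V := by omega
    obtain ⟨y, hy⟩ := Fintype.exists_ne_of_one_lt_card h1 x
    obtain ⟨w⟩ := hconn.preconnected x y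
    cases w with
    | nil => exact absurd rfl hy
    | cons h p => exact ⟨_, Finset.mem_univ _, h⟩
  obtain ⟨P, hpaths, hcardP, hedge, hend, hsep⟩ :=
    good_exists hG (Finset.univ.card) (Finset.univ : Finset V) le_rfl hd
  refine ⟨P, ⟨fun l hl => (hpaths l hl).1, ?_⟩, ?_, ?_, ?_⟩
  · intro e he f hf hef
    exact ⟨hsep e he (fun x _ => Finset.mem_univ x) f hf (fun x _ => Finset.mem_univ x) hef,
      hsep f hf (fun x _ => Finset.mem_univ x) e he (fun x _ => Finset.mem_univ x)
        (Ne.symm hef)⟩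
  · rw [hcardP, Finset.card_univ]
  · intro e he
    exact (hedge e he (fun x _ => Finset.mem_univ x)).card_filter
  · intro v0
    exact (hend v0 (Finset.mem_univ v0)).card_filter
end

section
/- Every connected cubic graph other than K₄ contains an edge that does not lie in any triangle. -/
open scoped Classical

lemma card_triple {V : Type*} [DecidableEq V] {a b c : V}
    (hab : a ≠ b) (hac : a ≠ c) (hbc : b ≠ c) :
    ({a, b, c} : Finset V).card = 3 := by
  rw [Finset.card_insert_of_notMem (by simp [hab, hac]),
    Finset.card_insert_of_notMem (by simp [hbc]), Finset.card_singleton]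

lemma cubic_aux {V : Type*} [Fintype V] (G : SimpleGraph V)
    (hcubic : ∀ v : V, G.degree v = 3)
    (hT : ∀ u w : V, G.Adj u w → ∃ t, G.Adj u t ∧ G.Adj w t)
    (v a b c : V) (hN : G.neighborFinset v = {a, b, c})
    (hab : a ≠ b) (hac : a ≠ c) (hbc : b ≠ c)
    (hnac : ¬ G.Adj a c) : False := by
  have hmem : ∀ x, G.Adj v x ↔ (x = a ∨ x = b ∨ x = c) := by
    intro x
    rw [← SimpleGraph.mem_neighborFinset, hN]; simp
  have hva : G.Adj v a := by rw [hmem]; tauto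
  have hvb : G.Adj v b := by rw [hmem]; tauto
  have hvc : G.Adj v c := by rw [hmem]; tauto
  obtain ⟨t, hvt, hat⟩ := hT v a hva
  have hab' : G.Adj a b := by
    rcases (hmem t).1 hvt with rfl | rfl | rfl
    · exact absurd hat (G.irrefl)
    · exact hat
    · exact absurd hat hnac
  obtain ⟨t, hvt, hct⟩ := hT v c hvc
  have hcb : G.Adj c b := by
    rcases (hmem t).1 hvt with rfl | rfl | rfl
    · exact absurd hct.symm hnac
    · exact hct
    · exact absurd hct (G.irrefl)
  have hvb' : v ≠ b := G.ne_of_adj hvb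
  have hva' : v ≠ a := G.ne_of_adj hva
  have hvc' : v ≠ c := G.ne_of_adj hvc
  -- N(b) = {v, a, c}
  have hNb : G.neighborFinset b = {v, a, c} := by
    symm
    apply Finset.eq_of_subset_of_card_le
    · intro x hx
      simp only [Finset.mem_insert, Finset.mem_singleton] at hx
      rw [SimpleGraph.mem_neighborFinset]
      rcases hx with rfl | rfl | rfl
      · exact hvb.symm
      · exact hab'.symm
      · exact hcb.symm
    · rw [SimpleGraph.card_neighborFinset_eq_degree, hcubic,
        card_triple hva' hvc' hac]
  have hmemb : ∀ x, G.Adj b x ↔ (x = v ∨ x = a ∨ x = c) := by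
    intro x
    rw [← SimpleGraph.mem_neighborFinset, hNb]; simp
  -- a has a third neighbor x ∉ {v, b}
  have hsub : ({v, b} : Finset V) ⊆ G.neighborFinset a := by
    intro x hx
    simp only [Finset.mem_insert, Finset.mem_singleton] at hx
    rw [SimpleGraph.mem_neighborFinset]
    rcases hx with rfl | rfl
    · exact hva.symm
    · exact hab'
  have hcard2 : ({v, b} : Finset V).card = 2 := by
    rw [Finset.card_insert_of_notMem (by simp [hvb']), Finset.card_singleton]
  have hss : ({v, b} : Finset V) ⊂ G.neighborFinset a := by
    refine hsub.ssubset_of_ne ?_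
    intro h
    have := hcubic a
    rw [← SimpleGraph.card_neighborFinset_eq_degree, ← h, hcard2] at this
    omega
  obtain ⟨x, hxa, hx⟩ := Finset.exists_of_ssubset hss
  simp only [Finset.mem_insert, Finset.mem_singleton, not_or] at hx
  obtain ⟨hxv, hxb⟩ := hx
  have hax : G.Adj a x := (SimpleGraph.mem_neighborFinset ..).1 hxa
  -- N(a) = {v, b, x}
  have hNa : G.neighborFinset a = {v, b, x} := by
    symm
    apply Finset.eq_of_subset_of_card_le
    · intro y hy
      simp only [Finset.mem_insert, Finset.mem_singleton] at hy
      rw [SimpleGraph.mem_neighborFinset]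
      rcases hy with rfl | rfl | rfl
      · exact hva.symm
      · exact hab'
      · exact hax
    · rw [SimpleGraph.card_neighborFinset_eq_degree, hcubic,
        card_triple hvb' (Ne.symm hxv) (Ne.symm hxb)]
  have hmema : ∀ y, G.Adj a y ↔ (y = v ∨ y = b ∨ y = x) := by
    intro y
    rw [← SimpleGraph.mem_neighborFinset, hNa]; simp
  -- edge a-x lies in no triangle
  obtain ⟨t, hat, hxt⟩ := hT a x hax
  rcases (hmema t).1 hat with rfl | rfl | rfl
  · -- t = v : x ~ v
    rcases (hmem x).1 hxt.symm with rfl | rfl | rfl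
    · exact G.irrefl hax
    · exact hxb rfl
    · exact hnac hax
  · -- t = b : x ~ b
    rcases (hmemb x).1 hxt.symm with rfl | rfl | rfl
    · exact hxv rfl
    · exact G.irrefl hax
    · exact hnac hax
  · exact G.irrefl hxt

/-- every connected cubic graph other than `K₄` contains an edge
lying in no triangle. -/
theorem exists_edge_not_in_triangle_of_cubic {V : Type*} [Fintype V]
    (G : SimpleGraph V) (hconn : G.Connected) (hcubic : ∀ v : V, G.degree v = 3)
    (hK4 : ¬ Nonempty (G ≃g (⊤ : SimpleGraph (Fin 4)))) :
    ∃ u v : V, G.Adj u v ∧ ∀ w : V, ¬ (G.Adj u w ∧ G.Adj v w) := by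
  by_contra h
  push_neg at h
  have hT : ∀ u w : V, G.Adj u w → ∃ t, G.Adj u t ∧ G.Adj w t := by
    intro u w huw
    obtain ⟨t, ht⟩ := h u w huw
    exact ⟨t, ht⟩
  obtain ⟨v⟩ := hconn.nonempty
  have h3 : (G.neighborFinset v).card = 3 := by
    rw [SimpleGraph.card_neighborFinset_eq_degree, hcubic]
  obtain ⟨a, b, c, hab, hac, hbc, hN⟩ := Finset.card_eq_three.1 h3
  have hmem : ∀ x, G.Adj v x ↔ (x = a ∨ x = b ∨ x = c) := by
    intro x
    rw [← SimpleGraph.mem_neighborFinset, hN]; simp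
  have hva : G.Adj v a := by rw [hmem]; tauto
  have hvb : G.Adj v b := by rw [hmem]; tauto
  have hvc : G.Adj v c := by rw [hmem]; tauto
  have hadjac : G.Adj a c := by
    by_contra hn
    exact cubic_aux G hcubic hT v a b c hN hab hac hbc hn
  have hadjab : G.Adj a b := by
    by_contra hn
    refine cubic_aux G hcubic hT v a c b ?_ hac hab hbc.symm hn
    rw [hN]; ext x; simp; tauto
  have hadjbc : G.Adj b c := by
    by_contra hn
    refine cubic_aux G hcubic hT v b a c ?_ hab.symm hbc hac hn
    rw [hN]; ext x; simp; tauto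
  have hva' : v ≠ a := G.ne_of_adj hva
  have hvb' : v ≠ b := G.ne_of_adj hvb
  have hvc' : v ≠ c := G.ne_of_adj hvc
  -- neighbor sets of a, b, c
  have nbh : ∀ (y p q r : V), p ≠ q → p ≠ r → q ≠ r →
      G.Adj y p → G.Adj y q → G.Adj y r →
      (∀ x, G.Adj y x ↔ (x = p ∨ x = q ∨ x = r)) := by
    intro y p q r hpq hpr hqr h1 h2 h3
    have : G.neighborFinset y = {p, q, r} := by
      symm
      apply Finset.eq_of_subset_of_card_le
      · intro x hx
        simp only [Finset.mem_insert, Finset.mem_singleton] at hx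
        rw [SimpleGraph.mem_neighborFinset]
        rcases hx with rfl | rfl | rfl <;> assumption
      · rw [SimpleGraph.card_neighborFinset_eq_degree, hcubic, card_triple hpq hpr hqr]
    intro x
    rw [← SimpleGraph.mem_neighborFinset, this]; simp
  have hmema := nbh a v b c hvb' hvc' hbc hva.symm hadjab hadjac
  have hmemb := nbh b v a c hva' hvc' hac hvb.symm hadjab.symm hadjbc
  have hmemc := nbh c v a b hva' hvb' hab hvc.symm hadjac.symm hadjbc.symm
  set S : Finset V := {v, a, b, c} with hS
  have hSmem : ∀ x, x ∈ S ↔ (x = v ∨ x = a ∨ x = b ∨ x = c) := by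
    intro x; rw [hS]; simp
  have hclosed : ∀ y ∈ S, ∀ z, G.Adj y z → z ∈ S := by
    intro y hy z hz
    rw [hSmem]
    rcases (hSmem y).1 hy with rfl | rfl | rfl | rfl
    · rcases (hmem z).1 hz with rfl | rfl | rfl <;> tauto
    · rcases (hmema z).1 hz with rfl | rfl | rfl <;> tauto
    · rcases (hmemb z).1 hz with rfl | rfl | rfl <;> tauto
    · rcases (hmemc z).1 hz with rfl | rfl | rfl <;> tauto
  have key : ∀ (y x : V), G.Walk y x → y ∈ S → x ∈ S := by
    intro y x p
    induction p with
    | nil => exact id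
    | cons h q ih => intro hy; exact ih (hclosed _ hy _ h)
  have hall : ∀ x : V, x ∈ S := by
    intro x
    exact key v x ((hconn v x).some) (by rw [hSmem]; tauto)
  have htop : G = ⊤ := by
    ext x y
    simp only [SimpleGraph.top_adj]
    constructor
    · exact G.ne_of_adj
    · intro hne
      have hx := (hSmem x).1 (hall x)
      have hy := (hSmem y).1 (hall y)
      rcases hx with rfl | rfl | rfl | rfl <;> rcases hy with rfl | rfl | rfl | rfl <;>
        first
          | exact absurd rfl hne
          | assumption
          | exact hva.symm
          | exact hvb.symm
          | exact hvc.symm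
          | exact hadjab.symm
          | exact hadjac.symm
          | exact hadjbc.symm
  have hcard : Fintype.card V = 4 := by
    rw [← Finset.card_univ]
    have huniv : (Finset.univ : Finset V) = S := by
      ext x; simp [hall x]
    rw [huniv, hS]
    rw [Finset.card_insert_of_notMem (by simp [hva', hvb', hvc']),
      Finset.card_insert_of_notMem (by simp [hab, hac]),
      Finset.card_insert_of_notMem (by simp [hbc]), Finset.card_singleton]
  have e : V ≃ Fin 4 := Fintype.equivFinOfCardEq hcard
  exact hK4 ⟨htop ▸ SimpleGraph.Iso.completeGraph e⟩
end
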